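/- arXiv:2006.12042 — 4 statements merged into one kernel-verified Lean document; each statement's English description precedes it below -/
import Mathlib

section
/- Every element of the two-qubit CS-Dihedral group H (the submonoid of 4×4 complex matrices generated by {X₀, X₁, T₀, T₁, CS}; all generators have finite order, so H is a group) is phase-equivalent to a matrix of the form CS^e · X₀^k · X₁^{k'} · T₀^l · T₁^{l'} where k, k' ∈ {0,1}, l, l' ∈ {0,…,m−1}, and e ∈ {0,…,m/d−1}. -/
open Matrix Kronecker

noncomputable section

/-- ω = exp(2πi/m). -/
def omega (m : ℕ) : ℂ := Complex.exp (2 * Real.pi * Complex.I / m)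

/-- The bit-flip gate X = !![0,1;1,0]. -/
def Xg : Matrix (Fin 2) (Fin 2) ℂ := !![0, 1; 1, 0]

/-- The phase gate T = !![1,0;0,ω]. -/
def Tg (m : ℕ) : Matrix (Fin 2) (Fin 2) ℂ := !![1, 0; 0, omega m]

/-- The inverse phase gate T⁻¹ = !![1,0;0,ω⁻¹]. -/
def Tginv (m : ℕ) : Matrix (Fin 2) (Fin 2) ℂ := !![1, 0; 0, (omega m)⁻¹]

/-- The Kronecker product of two 2×2 matrices, as a 4×4 matrix. -/
def kron (A B : Matrix (Fin 2) (Fin 2) ℂ) : Matrix (Fin 4) (Fin 4) ℂ :=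
  Matrix.reindex finProdFinEquiv finProdFinEquiv (A ⊗ₖ B)

/-- The controlled-X gate with control qubit 0 and target qubit 1. -/
def CX01 : Matrix (Fin 4) (Fin 4) ℂ :=
  !![1, 0, 0, 0; 0, 1, 0, 0; 0, 0, 0, 1; 0, 0, 1, 0]

/-- The controlled-X gate with control qubit 1 and target qubit 0. -/
def CX10 : Matrix (Fin 4) (Fin 4) ℂ :=
  !![1, 0, 0, 0; 0, 0, 0, 1; 0, 0, 1, 0; 0, 1, 0, 0]

/-- The controlled-S gate, the diagonal matrix with entries (1,1,1,ω²). -/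
def CSg (m : ℕ) : Matrix (Fin 4) (Fin 4) ℂ :=
  Matrix.diagonal ![1, 1, 1, (omega m) ^ 2]

/-- The inverse controlled-S gate, the diagonal matrix with entries (1,1,1,ω⁻²). -/
def CSginv (m : ℕ) : Matrix (Fin 4) (Fin 4) ℂ :=
  Matrix.diagonal ![1, 1, 1, ((omega m) ^ 2)⁻¹]
/-- X₀ = X ⊗ 1. -/
def X0 : Matrix (Fin 4) (Fin 4) ℂ := kron Xg 1

/-- X₁ = 1 ⊗ X. -/
def X1 : Matrix (Fin 4) (Fin 4) ℂ := kron 1 Xg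

/-- T₀ = T ⊗ 1. -/
def T0 (m : ℕ) : Matrix (Fin 4) (Fin 4) ℂ := kron (Tg m) 1

/-- T₁ = 1 ⊗ T. -/
def T1 (m : ℕ) : Matrix (Fin 4) (Fin 4) ℂ := kron 1 (Tg m)

/-- Two matrices are phase-equivalent if they differ by a nonzero scalar. -/
def PhaseEq {α : Type*} (U V : Matrix α α ℂ) : Prop := ∃ c : ℂ, c ≠ 0 ∧ U = c • V

-- explicit forms
lemma X0_eq : X0 = !![0,0,1,0; 0,0,0,1; 1,0,0,0; 0,1,0,0] := by
  ext ⟨i,hi⟩ ⟨j,hj⟩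
  interval_cases i <;> interval_cases j <;>
    simp [X0, kron, Xg, finProdFinEquiv, Matrix.one_apply, Fin.divNat, Fin.modNat,
      Fin.ext_iff, (show ((3:Fin 4):ℕ)=3 from rfl), Matrix.vecHead, Matrix.vecTail]
lemma X1_eq : X1 = !![0,1,0,0; 1,0,0,0; 0,0,0,1; 0,0,1,0] := by
  ext ⟨i,hi⟩ ⟨j,hj⟩
  interval_cases i <;> interval_cases j <;>
    simp [X1, kron, Xg, finProdFinEquiv, Matrix.one_apply, Fin.divNat, Fin.modNat,
      Fin.ext_iff, (show ((3:Fin 4):ℕ)=3 from rfl), Matrix.vecHead, Matrix.vecTail]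
lemma T0_eq (m : ℕ) : T0 m = Matrix.diagonal ![1,1,omega m,omega m] := by
  ext ⟨i,hi⟩ ⟨j,hj⟩
  interval_cases i <;> interval_cases j <;>
    simp [T0, kron, Tg, finProdFinEquiv, Matrix.one_apply, Fin.divNat, Fin.modNat,
      Fin.ext_iff, (show ((3:Fin 4):ℕ)=3 from rfl), Matrix.vecHead, Matrix.vecTail, Matrix.diagonal]
lemma T1_eq (m : ℕ) : T1 m = Matrix.diagonal ![1,omega m,1,omega m] := by
  ext ⟨i,hi⟩ ⟨j,hj⟩
  interval_cases i <;> interval_cases j <;>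
    simp [T1, kron, Tg, finProdFinEquiv, Matrix.one_apply, Fin.divNat, Fin.modNat,
      Fin.ext_iff, (show ((3:Fin 4):ℕ)=3 from rfl), Matrix.vecHead, Matrix.vecTail, Matrix.diagonal]

-- omega facts
lemma omega_ne_zero (m : ℕ) : omega m ≠ 0 := Complex.exp_ne_zero _
lemma omega_pow (m : ℕ) (hm : 0 < m) : omega m ^ m = 1 := by
  rw [omega, ← Complex.exp_nat_mul]
  have h : (m:ℂ) ≠ 0 := by exact_mod_cast hm.ne'
  have : (m:ℂ) * (2 * Real.pi * Complex.I / m) = 2 * Real.pi * Complex.I := by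
    field_simp
  rw [this, Complex.exp_two_pi_mul_I]

-- commutation (diagonal)
lemma comm_CS_T0 (m : ℕ) : Commute (CSg m) (T0 m) := by
  rw [Commute, SemiconjBy, CSg, T0_eq, diagonal_mul_diagonal, diagonal_mul_diagonal]
  exact congrArg _ (funext fun i => mul_comm _ _)
lemma comm_CS_T1 (m : ℕ) : Commute (CSg m) (T1 m) := by
  rw [Commute, SemiconjBy, CSg, T1_eq, diagonal_mul_diagonal, diagonal_mul_diagonal]
  exact congrArg _ (funext fun i => mul_comm _ _)
lemma comm_T0_T1 (m : ℕ) : Commute (T0 m) (T1 m) := by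
  rw [Commute, SemiconjBy, T0_eq, T1_eq, diagonal_mul_diagonal, diagonal_mul_diagonal]
  exact congrArg _ (funext fun i => mul_comm _ _)

-- commutation (explicit)
lemma comm_X0_X1 : Commute X0 X1 := by
  rw [Commute, SemiconjBy, X0_eq, X1_eq]
  ext i j
  fin_cases i <;> fin_cases j <;>
    simp [Matrix.mul_apply, Fin.sum_univ_four, Matrix.vecHead, Matrix.vecTail]
lemma comm_X0_T1 (m : ℕ) : Commute X0 (T1 m) := by
  rw [Commute, SemiconjBy, X0_eq, T1_eq]
  ext i j
  fin_cases i <;> fin_cases j <;>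
    simp [Matrix.mul_apply, Fin.sum_univ_four, Matrix.diagonal, Matrix.vecHead, Matrix.vecTail]
lemma comm_X1_T0 (m : ℕ) : Commute X1 (T0 m) := by
  rw [Commute, SemiconjBy, X1_eq, T0_eq]
  ext i j
  fin_cases i <;> fin_cases j <;>
    simp [Matrix.mul_apply, Fin.sum_univ_four, Matrix.diagonal, Matrix.vecHead, Matrix.vecTail]

lemma X0_sq : X0 * X0 = 1 := by
  rw [X0_eq]; ext i j
  fin_cases i <;> fin_cases j <;>
    simp [Matrix.mul_apply, Fin.sum_univ_four, Matrix.one_apply, Matrix.vecHead, Matrix.vecTail]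
lemma X1_sq : X1 * X1 = 1 := by
  rw [X1_eq]; ext i j
  fin_cases i <;> fin_cases j <;>
    simp [Matrix.mul_apply, Fin.sum_univ_four, Matrix.one_apply, Matrix.vecHead, Matrix.vecTail]

-- base exchange relations
lemma T0_X0_T0 (m : ℕ) : T0 m * X0 * T0 m = omega m • X0 := by
  rw [T0_eq, X0_eq]; ext i j
  fin_cases i <;> fin_cases j <;>
    simp [Matrix.mul_apply, Fin.sum_univ_four, Matrix.diagonal, Matrix.vecHead, Matrix.vecTail] <;> ring
lemma T1_X1_T1 (m : ℕ) : T1 m * X1 * T1 m = omega m • X1 := by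
  rw [T1_eq, X1_eq]; ext i j
  fin_cases i <;> fin_cases j <;>
    simp [Matrix.mul_apply, Fin.sum_univ_four, Matrix.diagonal, Matrix.vecHead, Matrix.vecTail] <;> ring
lemma CS_X0_CS (m : ℕ) : CSg m * X0 * CSg m = X0 * T1 m ^ 2 := by
  rw [CSg, X0_eq, T1_eq]; ext i j
  fin_cases i <;> fin_cases j <;>
    simp [pow_two, Matrix.mul_apply, Fin.sum_univ_four, Matrix.diagonal, Matrix.vecHead,
      Matrix.vecTail] <;> ring
lemma CS_X1_CS (m : ℕ) : CSg m * X1 * CSg m = X1 * T0 m ^ 2 := by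
  rw [CSg, X1_eq, T0_eq]; ext i j
  fin_cases i <;> fin_cases j <;>
    simp [pow_two, Matrix.mul_apply, Fin.sum_univ_four, Matrix.diagonal, Matrix.vecHead,
      Matrix.vecTail] <;> ring

-- powers
lemma T0_pow_m (m : ℕ) (hm : 0 < m) : T0 m ^ m = 1 := by
  rw [T0_eq, diagonal_pow]
  have h : (![1,1,omega m,omega m] : Fin 4 → ℂ) ^ m = 1 := by
    funext i
    fin_cases i <;> simp [Pi.pow_apply, omega_pow m hm]
  rw [h]; exact Matrix.diagonal_one
lemma T1_pow_m (m : ℕ) (hm : 0 < m) : T1 m ^ m = 1 := by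
  rw [T1_eq, diagonal_pow]
  have h : (![1,omega m,1,omega m] : Fin 4 → ℂ) ^ m = 1 := by
    funext i
    fin_cases i <;> simp [Pi.pow_apply, omega_pow m hm]
  rw [h]; exact Matrix.diagonal_one
lemma CS_pow_M (m : ℕ) (hm : 0 < m) : CSg m ^ (m / Nat.gcd m 2) = 1 := by
  rw [CSg, diagonal_pow]
  have key : (omega m ^ 2) ^ (m / Nat.gcd m 2) = 1 := by
    rw [← pow_mul]
    have h2 : 2 * (m / Nat.gcd m 2) = m * (2 / Nat.gcd m 2) := by
      rw [← Nat.mul_div_assoc 2 (Nat.gcd_dvd_left m 2),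
        ← Nat.mul_div_assoc m (Nat.gcd_dvd_right m 2), Nat.mul_comm 2 m]
    rw [h2, pow_mul, omega_pow m hm, one_pow]
  have h : (![1,1,1,omega m ^ 2] : Fin 4 → ℂ) ^ (m / Nat.gcd m 2) = 1 := by
    funext i
    fin_cases i <;> simp [Pi.pow_apply, key]
  rw [h]; exact Matrix.diagonal_one

-- helper: pow reduction mod order
lemma pow_mod_reduce {G : Type*} [Monoid G] {x : G} {n : ℕ} (h : x ^ n = 1) (a : ℕ) :
    x ^ a = x ^ (a % n) := by
  conv_lhs => rw [← Nat.div_add_mod a n]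
  rw [pow_add, pow_mul, h, one_pow, one_mul]

abbrev Mat4 := Matrix (Fin 4) (Fin 4) ℂ

-- continuation helpers
lemma swap3 {A B : Mat4} (h : Commute B A) (C : Mat4) : A * (B * C) = B * (A * C) := by
  rw [← mul_assoc, ← h.eq, mul_assoc]
lemma swapE {A B B' A' : Mat4} (h : A * B = B' * A') (C : Mat4) :
    A * (B * C) = B' * (A' * C) := by
  rw [← mul_assoc, h, mul_assoc]
lemma swapS {A B B' A' : Mat4} {c : ℂ} (h : A * B = c • (B' * A')) (C : Mat4) :
    A * (B * C) = c • (B' * (A' * C)) := by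
  rw [← mul_assoc, h, smul_mul_assoc, mul_assoc]
lemma merge1 {A : Mat4} (b : ℕ) (C : Mat4) : A * (A ^ b * C) = A ^ (b + 1) * C := by
  rw [← mul_assoc, ← pow_succ']
lemma mergeP {A : Mat4} (a b : ℕ) (C : Mat4) : A ^ a * (A ^ b * C) = A ^ (a + b) * C := by
  rw [← mul_assoc, ← pow_add]

-- derived exchange relations
lemma T0_mul_X0 (m : ℕ) (hm : 0 < m) :
    T0 m * X0 = omega m • (X0 * T0 m ^ (m - 1)) := by
  have hmm : (m - 1) + 1 = m := Nat.succ_pred_eq_of_pos hm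
  have h1 : T0 m * T0 m ^ (m - 1) = 1 := by rw [← pow_succ', hmm, T0_pow_m m hm]
  calc T0 m * X0 = T0 m * X0 * (T0 m * T0 m ^ (m - 1)) := by rw [h1, mul_one]
    _ = T0 m * X0 * T0 m * T0 m ^ (m - 1) := by rw [← mul_assoc]
    _ = (omega m • X0) * T0 m ^ (m - 1) := by rw [T0_X0_T0]
    _ = omega m • (X0 * T0 m ^ (m - 1)) := smul_mul_assoc _ _ _

lemma T1_mul_X1 (m : ℕ) (hm : 0 < m) :
    T1 m * X1 = omega m • (X1 * T1 m ^ (m - 1)) := by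
  have hmm : (m - 1) + 1 = m := Nat.succ_pred_eq_of_pos hm
  have h1 : T1 m * T1 m ^ (m - 1) = 1 := by rw [← pow_succ', hmm, T1_pow_m m hm]
  calc T1 m * X1 = T1 m * X1 * (T1 m * T1 m ^ (m - 1)) := by rw [h1, mul_one]
    _ = T1 m * X1 * T1 m * T1 m ^ (m - 1) := by rw [← mul_assoc]
    _ = (omega m • X1) * T1 m ^ (m - 1) := by rw [T1_X1_T1]
    _ = omega m • (X1 * T1 m ^ (m - 1)) := smul_mul_assoc _ _ _

lemma T0_pow_mul_X0 (m : ℕ) (hm : 0 < m) (a : ℕ) :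
    T0 m ^ a * X0 = (omega m ^ a) • (X0 * T0 m ^ (a * (m - 1))) := by
  induction a with
  | zero => simp
  | succ a ih =>
    calc T0 m ^ (a + 1) * X0 = T0 m ^ a * (T0 m * X0) := by rw [pow_succ, mul_assoc]
      _ = T0 m ^ a * (omega m • (X0 * T0 m ^ (m - 1))) := by rw [T0_mul_X0 m hm]
      _ = omega m • (T0 m ^ a * X0 * T0 m ^ (m - 1)) := by rw [mul_smul_comm, mul_assoc]
      _ = omega m • ((omega m ^ a • (X0 * T0 m ^ (a * (m - 1)))) * T0 m ^ (m - 1)) := by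
          rw [ih]
      _ = (omega m ^ (a + 1)) • (X0 * (T0 m ^ (a * (m - 1)) * T0 m ^ (m - 1))) := by
          rw [smul_mul_assoc, smul_smul, ← pow_succ', mul_assoc]
      _ = (omega m ^ (a + 1)) • (X0 * T0 m ^ ((a + 1) * (m - 1))) := by
          rw [← pow_add, show a * (m - 1) + (m - 1) = (a + 1) * (m - 1) by ring]

lemma T1_pow_mul_X1 (m : ℕ) (hm : 0 < m) (a : ℕ) :
    T1 m ^ a * X1 = (omega m ^ a) • (X1 * T1 m ^ (a * (m - 1))) := by
  induction a with
  | zero => simp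
  | succ a ih =>
    calc T1 m ^ (a + 1) * X1 = T1 m ^ a * (T1 m * X1) := by rw [pow_succ, mul_assoc]
      _ = T1 m ^ a * (omega m • (X1 * T1 m ^ (m - 1))) := by rw [T1_mul_X1 m hm]
      _ = omega m • (T1 m ^ a * X1 * T1 m ^ (m - 1)) := by rw [mul_smul_comm, mul_assoc]
      _ = omega m • ((omega m ^ a • (X1 * T1 m ^ (a * (m - 1)))) * T1 m ^ (m - 1)) := by
          rw [ih]
      _ = (omega m ^ (a + 1)) • (X1 * (T1 m ^ (a * (m - 1)) * T1 m ^ (m - 1))) := by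
          rw [smul_mul_assoc, smul_smul, ← pow_succ', mul_assoc]
      _ = (omega m ^ (a + 1)) • (X1 * T1 m ^ ((a + 1) * (m - 1))) := by
          rw [← pow_add, show a * (m - 1) + (m - 1) = (a + 1) * (m - 1) by ring]

lemma CS_pow_conj_X0 (m : ℕ) (e : ℕ) :
    CSg m ^ e * X0 * CSg m ^ e = X0 * T1 m ^ (2 * e) := by
  induction e with
  | zero => simp
  | succ e ih =>
    have hc : CSg m * T1 m ^ (2 * e) = T1 m ^ (2 * e) * CSg m :=
      ((comm_CS_T1 m).pow_right (2 * e)).eq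
    calc CSg m ^ (e + 1) * X0 * CSg m ^ (e + 1)
        = CSg m * (CSg m ^ e * X0 * CSg m ^ e) * CSg m := by
          nth_rewrite 1 [pow_succ']; nth_rewrite 1 [pow_succ]; simp only [mul_assoc]
      _ = CSg m * (X0 * T1 m ^ (2 * e)) * CSg m := by rw [ih]
      _ = CSg m * X0 * (T1 m ^ (2 * e) * CSg m) := by simp only [mul_assoc]
      _ = CSg m * X0 * (CSg m * T1 m ^ (2 * e)) := by rw [← hc]
      _ = (CSg m * X0 * CSg m) * T1 m ^ (2 * e) := by simp only [mul_assoc]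
      _ = X0 * T1 m ^ 2 * T1 m ^ (2 * e) := by rw [CS_X0_CS]
      _ = X0 * T1 m ^ (2 * (e + 1)) := by
          rw [mul_assoc, ← pow_add, show 2 + 2 * e = 2 * (e + 1) by ring]

lemma CS_pow_conj_X1 (m : ℕ) (e : ℕ) :
    CSg m ^ e * X1 * CSg m ^ e = X1 * T0 m ^ (2 * e) := by
  induction e with
  | zero => simp
  | succ e ih =>
    have hc : CSg m * T0 m ^ (2 * e) = T0 m ^ (2 * e) * CSg m :=
      ((comm_CS_T0 m).pow_right (2 * e)).eq
    calc CSg m ^ (e + 1) * X1 * CSg m ^ (e + 1)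
        = CSg m * (CSg m ^ e * X1 * CSg m ^ e) * CSg m := by
          nth_rewrite 1 [pow_succ']; nth_rewrite 1 [pow_succ]; simp only [mul_assoc]
      _ = CSg m * (X1 * T0 m ^ (2 * e)) * CSg m := by rw [ih]
      _ = CSg m * X1 * (T0 m ^ (2 * e) * CSg m) := by simp only [mul_assoc]
      _ = CSg m * X1 * (CSg m * T0 m ^ (2 * e)) := by rw [← hc]
      _ = (CSg m * X1 * CSg m) * T0 m ^ (2 * e) := by simp only [mul_assoc]
      _ = X1 * T0 m ^ 2 * T0 m ^ (2 * e) := by rw [CS_X1_CS]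
      _ = X1 * T0 m ^ (2 * (e + 1)) := by
          rw [mul_assoc, ← pow_add, show 2 + 2 * e = 2 * (e + 1) by ring]

lemma M_pos (m : ℕ) (hm : 0 < m) : 0 < m / Nat.gcd m 2 :=
  Nat.div_pos (Nat.le_of_dvd hm (Nat.gcd_dvd_left m 2))
    (Nat.gcd_pos_of_pos_left _ hm)

lemma X0_mul_CS_pow (m : ℕ) (hm : 0 < m) (e : ℕ) :
    X0 * CSg m ^ e = CSg m ^ (e * (m / Nat.gcd m 2 - 1)) * (X0 * T1 m ^ (2 * e)) := by
  set M := m / Nat.gcd m 2 with hMdef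
  have hM : 0 < M := M_pos m hm
  have h1 : CSg m ^ (e * (M - 1)) * CSg m ^ e = 1 := by
    have hM1 : M - 1 + 1 = M := by omega
    rw [← pow_add, show e * (M - 1) + e = (M - 1 + 1) * e by ring, hM1,
      pow_mul, CS_pow_M m hm, one_pow]
  calc X0 * CSg m ^ e = 1 * (X0 * CSg m ^ e) := (one_mul _).symm
    _ = CSg m ^ (e * (M - 1)) * CSg m ^ e * (X0 * CSg m ^ e) := by rw [h1]
    _ = CSg m ^ (e * (M - 1)) * (CSg m ^ e * X0 * CSg m ^ e) := by simp only [mul_assoc]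
    _ = CSg m ^ (e * (M - 1)) * (X0 * T1 m ^ (2 * e)) := by rw [CS_pow_conj_X0]

lemma X1_mul_CS_pow (m : ℕ) (hm : 0 < m) (e : ℕ) :
    X1 * CSg m ^ e = CSg m ^ (e * (m / Nat.gcd m 2 - 1)) * (X1 * T0 m ^ (2 * e)) := by
  set M := m / Nat.gcd m 2 with hMdef
  have hM : 0 < M := M_pos m hm
  have h1 : CSg m ^ (e * (M - 1)) * CSg m ^ e = 1 := by
    have hM1 : M - 1 + 1 = M := by omega
    rw [← pow_add, show e * (M - 1) + e = (M - 1 + 1) * e by ring, hM1,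
      pow_mul, CS_pow_M m hm, one_pow]
  calc X1 * CSg m ^ e = 1 * (X1 * CSg m ^ e) := (one_mul _).symm
    _ = CSg m ^ (e * (M - 1)) * CSg m ^ e * (X1 * CSg m ^ e) := by rw [h1]
    _ = CSg m ^ (e * (M - 1)) * (CSg m ^ e * X1 * CSg m ^ e) := by simp only [mul_assoc]
    _ = CSg m ^ (e * (M - 1)) * (X1 * T0 m ^ (2 * e)) := by rw [CS_pow_conj_X1]

def canon (m e k k' l l' : ℕ) : Mat4 :=
  CSg m ^ e * X0 ^ k * X1 ^ k' * T0 m ^ l * T1 m ^ l'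

lemma X0_pow_two : X0 ^ 2 = 1 := by rw [sq, X0_sq]
lemma X1_pow_two : X1 ^ 2 = 1 := by rw [sq, X1_sq]

lemma canon_reduce (m : ℕ) (hm : 0 < m) (e k k' l l' : ℕ) :
    canon m e k k' l l' =
      canon m (e % (m / Nat.gcd m 2)) (k % 2) (k' % 2) (l % m) (l' % m) := by
  unfold canon
  rw [pow_mod_reduce (CS_pow_M m hm) e, pow_mod_reduce X0_pow_two k,
    pow_mod_reduce X1_pow_two k', pow_mod_reduce (T0_pow_m m hm) l,
    pow_mod_reduce (T1_pow_m m hm) l']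

lemma step_CS (m e k k' l l' : ℕ) :
    CSg m * canon m e k k' l l' = canon m (e + 1) k k' l l' := by
  unfold canon
  rw [← mul_assoc, ← mul_assoc, ← mul_assoc, ← mul_assoc, ← pow_succ']

lemma step_T0 (m : ℕ) (hm : 0 < m) (e k k' l l' : ℕ) (hk : k < 2) :
    ∃ L : ℕ, ∃ c : ℂ, c ≠ 0 ∧
      T0 m * canon m e k k' l l' = c • canon m e k k' L l' := by
  interval_cases k
  · refine ⟨l + 1, 1, one_ne_zero, ?_⟩
    unfold canon
    simp only [pow_zero, mul_one, one_mul, one_smul, mul_assoc]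
    rw [swap3 ((comm_CS_T0 m).pow_left e), swap3 ((comm_X1_T0 m).pow_left k'), merge1]
  · refine ⟨m - 1 + l, omega m, omega_ne_zero m, ?_⟩
    unfold canon
    simp only [pow_one, mul_assoc]
    rw [swap3 ((comm_CS_T0 m).pow_left e), swapS (T0_mul_X0 m hm),
      swap3 (((comm_X1_T0 m).pow_left k').pow_right (m - 1)), mergeP, mul_smul_comm]

lemma step_T1 (m : ℕ) (hm : 0 < m) (e k k' l l' : ℕ) (hk' : k' < 2) :
    ∃ L' : ℕ, ∃ c : ℂ, c ≠ 0 ∧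
      T1 m * canon m e k k' l l' = c • canon m e k k' l L' := by
  interval_cases k'
  · refine ⟨l' + 1, 1, one_ne_zero, ?_⟩
    unfold canon
    simp only [pow_zero, mul_one, one_mul, one_smul, mul_assoc]
    rw [swap3 ((comm_CS_T1 m).pow_left e), swap3 ((comm_X0_T1 m).pow_left k),
      swap3 ((comm_T0_T1 m).pow_left l), ← pow_succ']
  · refine ⟨m - 1 + l', omega m, omega_ne_zero m, ?_⟩
    unfold canon
    simp only [pow_one, mul_assoc]
    rw [swap3 ((comm_CS_T1 m).pow_left e), swap3 ((comm_X0_T1 m).pow_left k),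
      swapS (T1_mul_X1 m hm),
      swap3 (((comm_T0_T1 m).pow_left l).pow_right (m - 1)), ← pow_add,
      mul_smul_comm, mul_smul_comm]

lemma step_X0 (m : ℕ) (hm : 0 < m) (e k k' l l' : ℕ) (hk' : k' < 2) :
    ∃ E K L' : ℕ, ∃ c : ℂ, c ≠ 0 ∧
      X0 * canon m e k k' l l' = c • canon m E K k' l L' := by
  interval_cases k'
  · refine ⟨e * (m / Nat.gcd m 2 - 1), k + 1, 2 * e + l', 1, one_ne_zero, ?_⟩
    unfold canon
    simp only [pow_zero, mul_one, one_mul, one_smul, mul_assoc]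
    rw [swapE (X0_mul_CS_pow m hm e)]
    simp only [mul_assoc]
    rw [
      swap3 (((comm_X0_T1 m).pow_left k).pow_right (2 * e)), merge1,
      swap3 (((comm_T0_T1 m).pow_left l).pow_right (2 * e)), ← pow_add]
  · refine ⟨e * (m / Nat.gcd m 2 - 1), k + 1, 2 * e * (m - 1) + l',
      omega m ^ (2 * e), pow_ne_zero _ (omega_ne_zero m), ?_⟩
    unfold canon
    simp only [pow_one, mul_assoc]
    rw [swapE (X0_mul_CS_pow m hm e)]
    simp only [mul_assoc]
    rw [
      swap3 (((comm_X0_T1 m).pow_left k).pow_right (2 * e)), merge1,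
      swapS (T1_pow_mul_X1 m hm (2 * e)),
      swap3 (((comm_T0_T1 m).pow_left l).pow_right (2 * e * (m - 1))), ← pow_add,
      mul_smul_comm, mul_smul_comm, Nat.mul_assoc 2 e (m - 1)]

lemma step_X1 (m : ℕ) (hm : 0 < m) (e k k' l l' : ℕ) (hk : k < 2) :
    ∃ E K' L : ℕ, ∃ c : ℂ, c ≠ 0 ∧
      X1 * canon m e k k' l l' = c • canon m E k K' L l' := by
  interval_cases k
  · refine ⟨e * (m / Nat.gcd m 2 - 1), k' + 1, 2 * e + l, 1, one_ne_zero, ?_⟩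
    unfold canon
    simp only [pow_zero, mul_one, one_mul, one_smul, mul_assoc]
    rw [swapE (X1_mul_CS_pow m hm e)]
    simp only [mul_assoc]
    rw [
      swap3 (((comm_X1_T0 m).pow_left k').pow_right (2 * e)), merge1, mergeP]
  · refine ⟨e * (m / Nat.gcd m 2 - 1), k' + 1, 2 * e * (m - 1) + l,
      omega m ^ (2 * e), pow_ne_zero _ (omega_ne_zero m), ?_⟩
    unfold canon
    simp only [pow_one, mul_assoc]
    rw [swapE (X1_mul_CS_pow m hm e)]
    simp only [mul_assoc]
    rw [
      swapS (T0_pow_mul_X0 m hm (2 * e)), mul_smul_comm, mul_smul_comm,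
      swap3 comm_X0_X1,
      swap3 (((comm_X1_T0 m).pow_left k').pow_right (2 * e * (m - 1))), merge1, mergeP,
      Nat.mul_assoc 2 e (m - 1)]


theorem CS_dihedral_canonical_form (m : ℕ) (hm : 0 < m) :
    ∀ U ∈ Submonoid.closure ({X0, X1, T0 m, T1 m, CSg m} :
        Set (Matrix (Fin 4) (Fin 4) ℂ)),
      ∃ e k k' l l' : ℕ, e < m / Nat.gcd m 2 ∧ k < 2 ∧ k' < 2 ∧ l < m ∧ l' < m ∧
        PhaseEq U (CSg m ^ e * X0 ^ k * X1 ^ k' * T0 m ^ l * T1 m ^ l') := by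
  have hM : 0 < m / Nat.gcd m 2 := M_pos m hm
  intro U hU
  induction hU using Submonoid.closure_induction_left with
  | one =>
    exact ⟨0, 0, 0, 0, 0, hM, by norm_num, by norm_num, hm, hm, 1, one_ne_zero, by simp⟩
  | mul_left x hx y hy ih =>
    obtain ⟨e, k, k', l, l', hE, hK, hK', hL, hL', c, hc, hy2⟩ := ih
    have hy3 : y = c • canon m e k k' l l' := hy2
    have key : ∃ E K K' L L' : ℕ, ∃ d : ℂ, d ≠ 0 ∧
        x * canon m e k k' l l' = d • canon m E K K' L L' := by
      simp only [Set.mem_insert_iff, Set.mem_singleton_iff] at hx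
      rcases hx with rfl | rfl | rfl | rfl | rfl
      · obtain ⟨E, K, L', d, hd, h⟩ := step_X0 m hm e k k' l l' hK'
        exact ⟨E, K, k', l, L', d, hd, h⟩
      · obtain ⟨E, K', L, d, hd, h⟩ := step_X1 m hm e k k' l l' hK
        exact ⟨E, k, K', L, l', d, hd, h⟩
      · obtain ⟨L, d, hd, h⟩ := step_T0 m hm e k k' l l' hK
        exact ⟨e, k, k', L, l', d, hd, h⟩
      · obtain ⟨L', d, hd, h⟩ := step_T1 m hm e k k' l l' hK'
        exact ⟨e, k, k', l, L', d, hd, h⟩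
      · exact ⟨e + 1, k, k', l, l', 1, one_ne_zero, by rw [step_CS, one_smul]⟩
    obtain ⟨E, K, K', L, L', d, hd, hx2⟩ := key
    refine ⟨E % (m / Nat.gcd m 2), K % 2, K' % 2, L % m, L' % m,
      Nat.mod_lt _ hM, Nat.mod_lt _ (by norm_num), Nat.mod_lt _ (by norm_num),
      Nat.mod_lt _ hm, Nat.mod_lt _ hm, c * d, mul_ne_zero hc hd, ?_⟩
    show x * y = (c * d) •
      canon m (E % (m / Nat.gcd m 2)) (K % 2) (K' % 2) (L % m) (L' % m)
    rw [← canon_reduce m hm, hy3, mul_smul_comm, hx2, smul_smul]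

end
end

section
/- Let r be a natural number. If U belongs to F(r+1), i.e., U is implementable by a circuit with exactly r+1 CX gates, then there exist U' ∈ F(r), indices i ≠ j in Fin n, and l ∈ {0,…,m/d−1} such that U = T_j^l · CX_{i,j} · U'. -/
open Matrix

noncomputable section

/-- X_i : the permutation matrix of the map x ↦ Function.update x i (x i + 1). -/
def Xn (n : ℕ) (i : Fin n) : Matrix (Fin n → ZMod 2) (Fin n → ZMod 2) ℂ :=
  Matrix.of fun x y => if x = Function.update y i (y i + 1) then 1 else 0

/-- T_i : the diagonal matrix whose (x,x) entry is ω^((x i).val). -/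
def Tn (m n : ℕ) (i : Fin n) : Matrix (Fin n → ZMod 2) (Fin n → ZMod 2) ℂ :=
  Matrix.diagonal fun x => omega m ^ (x i).val

/-- CX_{i,j} : the permutation matrix of the map x ↦ Function.update x j (x j + x i). -/
def CXn (n : ℕ) (i j : Fin n) : Matrix (Fin n → ZMod 2) (Fin n → ZMod 2) ℂ :=
  Matrix.of fun x y => if x = Function.update y j (y j + y i) then 1 else 0

/-- A gate of a CX-circuit: some X_i, some power of some T_i, or some CX_{i,j} with i ≠ j. -/
inductive GateCX (n : ℕ) where
  | X (i : Fin n)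
  | Tpow (i : Fin n) (l : ℕ)
  | CX (i j : Fin n) (h : i ≠ j)

/-- The matrix of a gate. -/
def GateCX.toMatrix (m : ℕ) {n : ℕ} : GateCX n → Matrix (Fin n → ZMod 2) (Fin n → ZMod 2) ℂ
  | .X i => Xn n i
  | .Tpow i l => Tn m n i ^ l
  | .CX i j _ => CXn n i j

/-- Whether a gate is a CX gate. -/
def GateCX.isCX {n : ℕ} : GateCX n → Bool
  | .CX _ _ _ => true
  | _ => false

/-- F(r) : the set of matrices implementable by a circuit with exactly r CX gates. -/
def Fset (m n r : ℕ) : Set (Matrix (Fin n → ZMod 2) (Fin n → ZMod 2) ℂ) :=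
  {U | ∃ L : List (GateCX n), (L.map (GateCX.toMatrix m)).prod = U ∧
    L.countP (fun g => g.isCX) = r}

namespace Aux
variable {n : ℕ}

def Pm (n : ℕ) (σ : (Fin n → ZMod 2) → (Fin n → ZMod 2)) :
    Matrix (Fin n → ZMod 2) (Fin n → ZMod 2) ℂ :=
  Matrix.of fun x y => if x = σ y then 1 else 0

lemma Pm_mul_Pm (σ τ : (Fin n → ZMod 2) → (Fin n → ZMod 2)) :
    Pm n σ * Pm n τ = Pm n (σ ∘ τ) := by
  ext x y
  simp only [Pm, Matrix.mul_apply, Matrix.of_apply, ite_mul, one_mul, zero_mul,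
    Function.comp_apply]
  rw [Finset.sum_eq_single (τ y)]
  · simp
  · intro b _ hb
    simp [hb]
  · simp

lemma diag_mul_Pm (f : (Fin n → ZMod 2) → ℂ) (σ : (Fin n → ZMod 2) → (Fin n → ZMod 2)) :
    Matrix.diagonal f * Pm n σ = Pm n σ * Matrix.diagonal (f ∘ σ) := by
  ext x y
  simp only [Pm, Matrix.diagonal_mul, Matrix.mul_diagonal, Matrix.of_apply, Function.comp_apply]
  by_cases h : x = σ y
  · subst h; simp
  · simp [h]

lemma Pm_id : Pm n id = 1 := by
  ext x y
  simp [Pm, Matrix.one_apply]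

lemma omega_pow_m {m : ℕ} (hm : 0 < m) : omega m ^ m = 1 := by
  rw [omega, ← Complex.exp_nat_mul]
  have : (m:ℂ) ≠ 0 := Nat.cast_ne_zero.2 hm.ne'
  rw [mul_div_cancel₀ _ this, Complex.exp_two_pi_mul_I]

lemma zmod2_cases (a : ZMod 2) : a = 0 ∨ a = 1 := by revert a; decide

lemma zmod2_add_self (a : ZMod 2) : a + a = 0 := by revert a; decide

def fσ (i : Fin n) : (Fin n → ZMod 2) → (Fin n → ZMod 2) :=
  fun y => Function.update y i (y i + 1)

def cσ (i j : Fin n) : (Fin n → ZMod 2) → (Fin n → ZMod 2) :=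
  fun y => Function.update y j (y j + y i)

lemma Xn_eq (i : Fin n) : Xn n i = Pm n (fσ i) := rfl
lemma CXn_eq (i j : Fin n) : CXn n i j = Pm n (cσ i j) := rfl

lemma Tn_pow (m : ℕ) (j : Fin n) (l : ℕ) :
    Tn m n j ^ l = Matrix.diagonal fun x => omega m ^ (l * (x j).val) := by
  rw [Tn, Matrix.diagonal_pow]
  have : ((fun x : Fin n → ZMod 2 => omega m ^ (x j).val) ^ l)
      = fun x => omega m ^ (l * (x j).val) := by
    funext x
    rw [Pi.pow_apply, ← pow_mul, mul_comm]
  rw [this]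

-- σ composition lemmas
lemma fσ_comp_cσ_of_ne {i j k : Fin n} (hij : i ≠ j) (hk : k ≠ i) :
    fσ k ∘ cσ i j = cσ i j ∘ fσ k := by
  funext y t
  simp only [Function.comp_apply, fσ, cσ, Function.update_apply]
  by_cases h1 : t = k <;> by_cases h2 : t = j <;>
    simp_all [Function.update_apply, Ne.symm hk] <;> ring

lemma fσ_comp_cσ_i {i j : Fin n} (hij : i ≠ j) :
    fσ i ∘ cσ i j = cσ i j ∘ fσ i ∘ fσ j := by
  funext y t
  simp only [Function.comp_apply, fσ, cσ, Function.update_apply]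
  by_cases h1 : t = i <;> by_cases h2 : t = j <;>
    simp_all [Function.update_apply, Ne.symm hij] <;>
    first
    | rfl
    | (rw [show y j + 1 + (y i + 1) = y j + y i + (1+1) by ring,
        zmod2_add_self, add_zero])

lemma fσ_invol (k : Fin n) : fσ k ∘ fσ k = id := by
  funext y t
  simp only [Function.comp_apply, fσ, Function.update_apply, id]
  by_cases h : t = k <;> simp_all [Function.update_apply]
  rw [show y k + 1 + 1 = y k + (1+1) by ring, zmod2_add_self, add_zero]

lemma diag_comm (f : (Fin n → ZMod 2) → ℂ) (σ : (Fin n → ZMod 2) → (Fin n → ZMod 2))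
    (h : f ∘ σ = f) : Pm n σ * Matrix.diagonal f = Matrix.diagonal f * Pm n σ := by
  rw [diag_mul_Pm, h]

lemma X_comm_Tpow {m : ℕ} {k j : Fin n} (hkj : k ≠ j) (l : ℕ) :
    Xn n k * Tn m n j ^ l = Tn m n j ^ l * Xn n k := by
  rw [Tn_pow, Xn_eq]
  refine diag_comm _ _ ?_
  funext x
  simp [fσ, Function.update_apply, Ne.symm hkj]

lemma Tpow_comm {m : ℕ} (k j : Fin n) (a l : ℕ) :
    Tn m n k ^ a * Tn m n j ^ l = Tn m n j ^ l * Tn m n k ^ a := by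
  rw [Tn_pow, Tn_pow, Matrix.diagonal_mul_diagonal, Matrix.diagonal_mul_diagonal]
  have : (fun i : Fin n → ZMod 2 => omega m ^ (a * (i k).val) * omega m ^ (l * (i j).val))
      = fun i => omega m ^ (l * (i j).val) * omega m ^ (a * (i k).val) := by
    funext x; ring
  rw [this]

lemma X_comm_CX {i j k : Fin n} (hij : i ≠ j) (hk : k ≠ i) :
    Xn n k * CXn n i j = CXn n i j * Xn n k := by
  rw [Xn_eq, CXn_eq, Pm_mul_Pm, Pm_mul_Pm, fσ_comp_cσ_of_ne hij hk]

lemma Xi_mul_CX {i j : Fin n} (hij : i ≠ j) :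
    Xn n i * CXn n i j = CXn n i j * (Xn n i * Xn n j) := by
  rw [Xn_eq, Xn_eq, CXn_eq, Pm_mul_Pm, Pm_mul_Pm, Pm_mul_Pm, fσ_comp_cσ_i hij]

lemma Tpow_comm_CX {m : ℕ} {i j k : Fin n} (hkj : k ≠ j) (a : ℕ) :
    Tn m n k ^ a * CXn n i j = CXn n i j * Tn m n k ^ a := by
  rw [Tn_pow, CXn_eq, diag_mul_Pm]
  have : ((fun x => omega m ^ (a * (x k).val)) ∘ cσ i j)
      = fun x : Fin n → ZMod 2 => omega m ^ (a * (x k).val) := by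
    funext x
    simp [cσ, Function.update_apply, hkj]
  rw [this]

lemma Pm_mul_diag_invol (f : (Fin n → ZMod 2) → ℂ) (σ : (Fin n → ZMod 2) → (Fin n → ZMod 2))
    (hσ : σ ∘ σ = id) : Pm n σ * Matrix.diagonal f = Matrix.diagonal (f ∘ σ) * Pm n σ := by
  rw [diag_mul_Pm]
  have : (f ∘ σ) ∘ σ = f := by
    funext x
    simp only [Function.comp_apply]
    rw [show σ (σ x) = x from congrFun hσ x]
  rw [this]

lemma Xj_mul_Tpow {m : ℕ} (hm : 0 < m) (j : Fin n) {l : ℕ} (hl : l ≤ m) :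
    Xn n j * Tn m n j ^ l = omega m ^ l • (Tn m n j ^ (m - l) * Xn n j) := by
  rw [Tn_pow, Tn_pow, Xn_eq, Pm_mul_diag_invol _ _ (fσ_invol j), ← smul_mul_assoc]
  have h2 : ((fun x => omega m ^ (l * (x j).val)) ∘ fσ j)
      = fun x : Fin n → ZMod 2 => omega m ^ l * omega m ^ ((m - l) * (x j).val) := by
    funext x
    simp only [Function.comp_apply, fσ, Function.update_self]
    rcases zmod2_cases (x j) with h | h <;> rw [h]
    · rw [show ((0:ZMod 2)+1).val = 1 from rfl, show ((0:ZMod 2)).val = 0 from rfl]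
      rw [mul_one, mul_zero, pow_zero, mul_one]
    · rw [show ((1:ZMod 2)+1).val = 0 from rfl, show ((1:ZMod 2)).val = 1 from rfl]
      rw [mul_zero, pow_zero, mul_one, ← pow_add, Nat.add_sub_cancel' hl,
        omega_pow_m hm]
  rw [h2]
  rw [show (omega m ^ l • Matrix.diagonal fun x : Fin n → ZMod 2 => omega m ^ ((m - l) * (x j).val))
    = Matrix.diagonal fun x : Fin n → ZMod 2 => omega m ^ l * omega m ^ ((m - l) * (x j).val) by
      rw [← Matrix.diagonal_smul]; rfl]

lemma omega_pow_two_md {m : ℕ} (hm : 0 < m) :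
    omega m ^ (2 * (m / Nat.gcd m 2)) = 1 := by
  rcases Nat.even_or_odd m with he | ho
  · have h2 : Nat.gcd m 2 = 2 := Nat.gcd_eq_right he.two_dvd
    rw [h2, Nat.mul_div_cancel' he.two_dvd, omega_pow_m hm]
  · have h1 : Nat.gcd m 2 = 1 := ho.coprime_two_right
    rw [h1, Nat.div_one, mul_comm, pow_mul, omega_pow_m hm, one_pow]

lemma Tmd_mul_CX {m : ℕ} (hm : 0 < m) {i j : Fin n} (hij : i ≠ j) :
    Tn m n j ^ (m / Nat.gcd m 2) * CXn n i j
      = CXn n i j * (Tn m n i ^ (m / Nat.gcd m 2) * Tn m n j ^ (m / Nat.gcd m 2)) := by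
  set k := m / Nat.gcd m 2 with hk
  simp only [Tn_pow]
  rw [CXn_eq, diag_mul_Pm, Matrix.diagonal_mul_diagonal]
  have : ((fun x => omega m ^ (k * (x j).val)) ∘ cσ i j)
      = fun x : Fin n → ZMod 2 => omega m ^ (k * (x i).val) * omega m ^ (k * (x j).val) := by
    funext x
    simp only [Function.comp_apply, cσ, Function.update_self]
    rcases zmod2_cases (x i) with hi | hi <;> rcases zmod2_cases (x j) with hj | hj <;>
      rw [hi, hj] <;>
      simp only [show ((0:ZMod 2)+0) = 0 from rfl, show ((1:ZMod 2)+0) = 1 from rfl,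
        show ((0:ZMod 2)+1) = 1 from rfl, show ((1:ZMod 2)+1) = 0 from rfl,
        show ((0:ZMod 2)).val = 0 from rfl, show ((1:ZMod 2)).val = 1 from rfl,
        mul_zero, mul_one, pow_zero, one_mul]
    rw [← pow_add, ← two_mul, omega_pow_two_md hm]
  rw [this]

lemma gadget {m : ℕ} (hm : 0 < m) (j : Fin n) (a : ℕ) :
    Xn n j * Tn m n j ^ a * Xn n j * Tn m n j ^ a = omega m ^ a • 1 := by
  rw [Tn_pow, Xn_eq, Pm_mul_diag_invol _ _ (fσ_invol j)]
  rw [show Matrix.diagonal ((fun x => omega m ^ (a * (x j).val)) ∘ fσ j) * Pm n (fσ j) *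
        Pm n (fσ j) * Matrix.diagonal (fun x => omega m ^ (a * (x j).val))
      = Matrix.diagonal ((fun x => omega m ^ (a * (x j).val)) ∘ fσ j) * (Pm n (fσ j) *
        Pm n (fσ j)) * Matrix.diagonal (fun x => omega m ^ (a * (x j).val)) by
    rw [mul_assoc (Matrix.diagonal _) (Pm n (fσ j)) (Pm n (fσ j))]]
  rw [Pm_mul_Pm, fσ_invol, Pm_id, mul_one, Matrix.diagonal_mul_diagonal]
  have : (fun i : Fin n → ZMod 2 =>
      ((fun x => omega m ^ (a * (x j).val)) ∘ fσ j) i * omega m ^ (a * (i j).val))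
      = fun _ => omega m ^ a := by
    funext x
    simp only [Function.comp_apply, fσ, Function.update_self]
    rcases zmod2_cases (x j) with h | h <;> rw [h]
    · rw [show ((0:ZMod 2)+1).val = 1 from rfl, show ((0:ZMod 2)).val = 0 from rfl,
        mul_one, mul_zero, pow_zero, mul_one]
    · rw [show ((1:ZMod 2)+1).val = 0 from rfl, show ((1:ZMod 2)).val = 1 from rfl,
        mul_zero, pow_zero, mul_one, one_mul]
  have h3 : (fun _ : Fin n → ZMod 2 => omega m ^ a) = (omega m ^ a) • (fun _ => (1:ℂ)) := by
    funext x; simp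
  rw [this, h3, Matrix.diagonal_smul, Matrix.diagonal_one]

end Aux

namespace Aux
variable {n : ℕ}

lemma md_pos {m : ℕ} (hm : 0 < m) : 0 < m / Nat.gcd m 2 :=
  Nat.div_pos (Nat.le_of_dvd hm (Nat.gcd_dvd_left m 2))
    (Nat.gcd_pos_of_pos_left 2 hm)

lemma md_le {m : ℕ} (hm : 0 < m) : m / Nat.gcd m 2 ≤ m :=
  Nat.div_le_self m _

lemma reduce {m : ℕ} (hm : 0 < m) {i j : Fin n} (hij : i ≠ j) (e : ℕ) :
    ∃ l' : ℕ, l' < m / Nat.gcd m 2 ∧ ∃ Q : List (GateCX n),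
      Q.countP (fun g => g.isCX) = 0 ∧
      Tn m n j ^ e * CXn n i j
        = Tn m n j ^ l' * CXn n i j * (Q.map (GateCX.toMatrix m)).prod := by
  induction e using Nat.strong_induction_on with
  | _ e ih =>
    by_cases he : e < m / Nat.gcd m 2
    · exact ⟨e, he, [], rfl, by simp⟩
    · have hmd : 0 < m / Nat.gcd m 2 := md_pos hm
      obtain ⟨l', hl', Q, hQ, hE⟩ := ih (e - m / Nat.gcd m 2) (by omega)
      refine ⟨l', hl', Q ++ [GateCX.Tpow i (m / Nat.gcd m 2),
        GateCX.Tpow j (m / Nat.gcd m 2)], ?_, ?_⟩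
      · simp only [List.countP_append, hQ]
        rfl
      · have h1 : Tn m n j ^ e
            = Tn m n j ^ (e - m / Nat.gcd m 2) * Tn m n j ^ (m / Nat.gcd m 2) := by
          rw [← pow_add]
          congr 1
          omega
        rw [h1, mul_assoc, Tmd_mul_CX hm hij, ← mul_assoc, hE]
        simp only [List.map_append, List.prod_append, List.map_cons, List.map_nil,
          List.prod_cons, List.prod_nil, GateCX.toMatrix]
        rw [mul_one]
        simp only [mul_assoc]

lemma step {m : ℕ} (hm : 0 < m) (g : GateCX n) (hg : g.isCX = false)
    {i j : Fin n} (hij : i ≠ j) {l : ℕ} (hl : l < m / Nat.gcd m 2) :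
    ∃ l' : ℕ, l' < m / Nat.gcd m 2 ∧ ∃ Q : List (GateCX n),
      Q.countP (fun g => g.isCX) = 0 ∧
      g.toMatrix m * (Tn m n j ^ l * CXn n i j)
        = Tn m n j ^ l' * CXn n i j * (Q.map (GateCX.toMatrix m)).prod := by
  match g with
  | .CX _ _ _ => simp [GateCX.isCX] at hg
  | .Tpow k a =>
    by_cases hkj : k = j
    · obtain ⟨l', hl', Q, hQ, hE⟩ := reduce hm hij (a + l)
      refine ⟨l', hl', Q, hQ, ?_⟩
      rw [GateCX.toMatrix, hkj, ← mul_assoc, ← pow_add, hE]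
    · refine ⟨l, hl, [.Tpow k a], by simp [GateCX.isCX], ?_⟩
      rw [GateCX.toMatrix, ← mul_assoc, Tpow_comm, mul_assoc, Tpow_comm_CX hkj,
        ← mul_assoc]
      simp [GateCX.toMatrix]
  | .X k =>
    by_cases hkj : k = j
    · obtain ⟨l', hl', Q, hQ, hE⟩ := reduce hm hij (m - l)
      refine ⟨l', hl',
        ([GateCX.X j, GateCX.Tpow j l, GateCX.X j, GateCX.Tpow j l] ++ Q) ++ [GateCX.X j],
        by simp only [List.countP_append, hQ]; rfl, ?_⟩
      have hXT : Xn n j * Tn m n j ^ l = omega m ^ l • (Tn m n j ^ (m - l) * Xn n j) :=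
        Xj_mul_Tpow hm j (le_trans hl.le (md_le hm))
      rw [show (GateCX.X k).toMatrix m = Xn n j by rw [GateCX.toMatrix, hkj]]
      calc Xn n j * (Tn m n j ^ l * CXn n i j)
          = (Xn n j * Tn m n j ^ l) * CXn n i j := by rw [mul_assoc]
        _ = omega m ^ l • (Tn m n j ^ (m - l) * (Xn n j * CXn n i j)) := by
            rw [hXT, smul_mul_assoc, mul_assoc]
        _ = omega m ^ l • (Tn m n j ^ (m - l) * (CXn n i j * Xn n j)) := by
            rw [X_comm_CX hij (Ne.symm hij)]
        _ = omega m ^ l • ((Tn m n j ^ (m - l) * CXn n i j) * Xn n j) := by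
            rw [mul_assoc]
        _ = omega m ^ l • ((Tn m n j ^ l' * CXn n i j * (Q.map (GateCX.toMatrix m)).prod)
              * Xn n j) := by rw [hE]
        _ = Tn m n j ^ l' * CXn n i j *
              ((omega m ^ l • 1) * ((Q.map (GateCX.toMatrix m)).prod * Xn n j)) := by
            rw [smul_mul_assoc, one_mul, mul_smul_comm, mul_assoc]
        _ = Tn m n j ^ l' * CXn n i j *
              ((([GateCX.X j, GateCX.Tpow j l, GateCX.X j, GateCX.Tpow j l] ++ Q)
                ++ [GateCX.X j]).map (GateCX.toMatrix m)).prod := by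
            congr 1
            simp only [List.map_append, List.prod_append, List.map_cons, List.map_nil,
              List.prod_cons, List.prod_nil, GateCX.toMatrix]
            rw [← gadget hm j l]
            simp only [mul_one, mul_assoc]
    · by_cases hki : k = i
      · refine ⟨l, hl, [.X i, .X j], by simp [GateCX.isCX], ?_⟩
        rw [GateCX.toMatrix, hki, ← mul_assoc,
          X_comm_Tpow (by rw [← hki]; exact hkj), mul_assoc, Xi_mul_CX hij,
          ← mul_assoc]
        simp [GateCX.toMatrix, mul_assoc]
      · refine ⟨l, hl, [.X k], by simp [GateCX.isCX], ?_⟩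
        rw [GateCX.toMatrix, ← mul_assoc, X_comm_Tpow hkj, mul_assoc, X_comm_CX hij hki,
          ← mul_assoc]
        simp [GateCX.toMatrix]

lemma push_list {m : ℕ} (hm : 0 < m) (A : List (GateCX n))
    (hA : A.countP (fun g => g.isCX) = 0) {i j : Fin n} (hij : i ≠ j) {l : ℕ}
    (hl : l < m / Nat.gcd m 2) :
    ∃ l' : ℕ, l' < m / Nat.gcd m 2 ∧ ∃ Q : List (GateCX n),
      Q.countP (fun g => g.isCX) = 0 ∧
      (A.map (GateCX.toMatrix m)).prod * (Tn m n j ^ l * CXn n i j)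
        = Tn m n j ^ l' * CXn n i j * (Q.map (GateCX.toMatrix m)).prod := by
  induction A generalizing l with
  | nil => exact ⟨l, hl, [], rfl, by simp [mul_assoc]⟩
  | cons g A ih =>
    rw [List.countP_cons] at hA
    have hg : g.isCX = false := by
      cases hgb : g.isCX
      · rfl
      · rw [hgb] at hA; simp at hA
    have hA' : A.countP (fun g => g.isCX) = 0 := by
      rw [hg] at hA; simpa using hA
    obtain ⟨l1, hl1, Q1, hQ1, hE1⟩ := ih hA' hl
    obtain ⟨l2, hl2, Q2, hQ2, hE2⟩ := step hm g hg hij hl1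
    refine ⟨l2, hl2, Q2 ++ Q1, by simp only [List.countP_append, hQ1, hQ2], ?_⟩
    calc ((g :: A).map (GateCX.toMatrix m)).prod * (Tn m n j ^ l * CXn n i j)
        = g.toMatrix m * ((A.map (GateCX.toMatrix m)).prod * (Tn m n j ^ l * CXn n i j)) := by
          rw [List.map_cons, List.prod_cons, mul_assoc]
      _ = g.toMatrix m * (Tn m n j ^ l1 * CXn n i j * (Q1.map (GateCX.toMatrix m)).prod) := by
          rw [hE1]
      _ = (g.toMatrix m * (Tn m n j ^ l1 * CXn n i j)) * (Q1.map (GateCX.toMatrix m)).prod := by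
          rw [← mul_assoc]
      _ = Tn m n j ^ l2 * CXn n i j * (Q2.map (GateCX.toMatrix m)).prod
            * (Q1.map (GateCX.toMatrix m)).prod := by rw [hE2]
      _ = Tn m n j ^ l2 * CXn n i j * (((Q2 ++ Q1).map (GateCX.toMatrix m)).prod) := by
          rw [List.map_append, List.prod_append, mul_assoc]

lemma split_first (L : List (GateCX n)) (r : ℕ)
    (hL : L.countP (fun g => g.isCX) = r + 1) :
    ∃ (A : List (GateCX n)) (i j : Fin n) (hij : i ≠ j) (B : List (GateCX n)),
      L = A ++ GateCX.CX i j hij :: B ∧ A.countP (fun g => g.isCX) = 0 ∧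
        B.countP (fun g => g.isCX) = r := by
  induction L with
  | nil => simp at hL
  | cons g L ih =>
    rw [List.countP_cons] at hL
    match g with
    | .CX i j hij =>
      refine ⟨[], i, j, hij, L, rfl, rfl, ?_⟩
      rw [show ((GateCX.CX i j hij).isCX) = true from rfl] at hL
      simpa using hL
    | .X i =>
      have h : L.countP (fun g => g.isCX) = r + 1 := by
        rw [show ((GateCX.X i : GateCX n).isCX) = false from rfl] at hL
        simpa using hL
      obtain ⟨A, i', j', hij, B, h1, h2, h3⟩ := ih h
      exact ⟨.X i :: A, i', j', hij, B, by rw [h1]; rfl,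
        by rw [List.countP_cons, h2]; rfl, h3⟩
    | .Tpow i a =>
      have h : L.countP (fun g => g.isCX) = r + 1 := by
        rw [show ((GateCX.Tpow i a : GateCX n).isCX) = false from rfl] at hL
        simpa using hL
      obtain ⟨A, i', j', hij, B, h1, h2, h3⟩ := ih h
      exact ⟨.Tpow i a :: A, i', j', hij, B, by rw [h1]; rfl,
        by rw [List.countP_cons, h2]; rfl, h3⟩

end Aux

theorem F_succ_decomposition (m n : ℕ) (hm : 0 < m) (hn : 0 < n) (r : ℕ)
    (U : Matrix (Fin n → ZMod 2) (Fin n → ZMod 2) ℂ) (hU : U ∈ Fset m n (r + 1)) :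
    ∃ U' ∈ Fset m n r, ∃ i j : Fin n, ∃ l : ℕ, i ≠ j ∧ l < m / Nat.gcd m 2 ∧
      U = Tn m n j ^ l * CXn n i j * U' := by
  obtain ⟨L, hLprod, hLcount⟩ := hU
  obtain ⟨A, i, j, hij, B, hsplit, hA, hB⟩ := Aux.split_first L r hLcount
  obtain ⟨l', hl', Q, hQ, hE⟩ := Aux.push_list hm A hA hij (l := 0) (Aux.md_pos hm)
  rw [pow_zero, one_mul] at hE
  refine ⟨((Q ++ B).map (GateCX.toMatrix m)).prod,
    ⟨Q ++ B, rfl, by rw [List.countP_append, hQ, hB, Nat.zero_add]⟩,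
    i, j, l', hij, hl', ?_⟩
  rw [← hLprod, hsplit]
  calc ((A ++ GateCX.CX i j hij :: B).map (GateCX.toMatrix m)).prod
      = (A.map (GateCX.toMatrix m)).prod * (CXn n i j * (B.map (GateCX.toMatrix m)).prod) := by
        rw [List.map_append, List.prod_append, List.map_cons, List.prod_cons]
        rfl
    _ = ((A.map (GateCX.toMatrix m)).prod * CXn n i j) * (B.map (GateCX.toMatrix m)).prod := by
        rw [mul_assoc]
    _ = (Tn m n j ^ l' * CXn n i j * (Q.map (GateCX.toMatrix m)).prod)
          * (B.map (GateCX.toMatrix m)).prod := by rw [hE]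
    _ = Tn m n j ^ l' * CXn n i j * ((Q ++ B).map (GateCX.toMatrix m)).prod := by
        rw [List.map_append, List.prod_append, mul_assoc]

end
end

section
/- Let r be a natural number. The number of phase-equivalence classes of elements of F(r+1) is at most (m·(n²−n)/d) times the number of phase-equivalence classes of elements of F(r), where F(r) is the set of matrices implementable by a circuit with exactly r CX gates. -/
open Matrix

noncomputable section

namespace CXAux

lemma omega_ne_zero (m : ℕ) : omega m ≠ 0 := Complex.exp_ne_zero _

lemma omega_pow_m {m : ℕ} (hm : 0 < m) : omega m ^ m = 1 := by
  rw [omega, ← Complex.exp_nat_mul]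
  rw [show (m : ℂ) * (2 * Real.pi * Complex.I / m) = 2 * Real.pi * Complex.I by
    have : (m : ℂ) ≠ 0 := Nat.cast_ne_zero.mpr hm.ne'
    field_simp]
  exact Complex.exp_two_pi_mul_I

lemma omega_pow_two_mul {m : ℕ} (hm : 0 < m) :
    omega m ^ (2 * (m / Nat.gcd m 2)) = 1 := by
  rcases (Nat.Prime.eq_one_or_self_of_dvd Nat.prime_two _ (Nat.gcd_dvd_right m 2)) with h | h
  · rw [h, Nat.div_one, mul_comm, pow_mul, omega_pow_m hm, one_pow]
  · have h2 : 2 ∣ m := h ▸ Nat.gcd_dvd_left m 2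
    rw [h, Nat.mul_div_cancel' h2, omega_pow_m hm]

lemma zmod2_cases : ∀ a : ZMod 2, a = 0 ∨ a = 1 := by decide

@[simp] lemma zval0 : ((0:ZMod 2)).val = 0 := rfl
@[simp] lemma zval1 : ((1:ZMod 2)).val = 1 := rfl
@[simp] lemma zval00 : ((0:ZMod 2) + 0).val = 0 := rfl
@[simp] lemma zval01 : ((0:ZMod 2) + 1).val = 1 := rfl
@[simp] lemma zval10 : ((1:ZMod 2) + 0).val = 1 := rfl
@[simp] lemma zval11 : ((1:ZMod 2) + 1).val = 0 := rfl
@[simp] lemma ztwo : (1:ZMod 2) + 1 = 0 := rfl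

def pm (n : ℕ) (σ : (Fin n → ZMod 2) → (Fin n → ZMod 2)) :
    Matrix (Fin n → ZMod 2) (Fin n → ZMod 2) ℂ :=
  Matrix.of fun x y => if x = σ y then 1 else 0

lemma pm_mul {n : ℕ} (σ τ : (Fin n → ZMod 2) → (Fin n → ZMod 2)) :
    pm n σ * pm n τ = pm n (σ ∘ τ) := by
  ext x z
  simp only [pm, Matrix.mul_apply, Matrix.of_apply, Function.comp]
  rw [Finset.sum_eq_single (τ z)]
  · simp
  · intro y _ hy; simp [hy]
  · simp

lemma pm_id {n : ℕ} : pm n (fun x => x) = 1 := by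
  ext x y; simp [pm, Matrix.one_apply]

lemma diagonal_mul_pm {n : ℕ} (D : (Fin n → ZMod 2) → ℂ)
    (σ : (Fin n → ZMod 2) → (Fin n → ZMod 2)) :
    Matrix.diagonal D * pm n σ = pm n σ * Matrix.diagonal (fun x => D (σ x)) := by
  ext x y
  rw [Matrix.diagonal_mul, Matrix.mul_diagonal]
  simp only [pm, Matrix.of_apply]
  by_cases h : x = σ y
  · subst h; simp [mul_comm]
  · simp [h]

lemma Xn_pm {n : ℕ} (i : Fin n) :
    Xn n i = pm n (fun x => Function.update x i (x i + 1)) := rfl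

lemma CXn_pm {n : ℕ} (i j : Fin n) :
    CXn n i j = pm n (fun x => Function.update x j (x j + x i)) := rfl

lemma Tn_pow {m n : ℕ} (i : Fin n) (l : ℕ) :
    Tn m n i ^ l = Matrix.diagonal fun x => omega m ^ ((x i).val * l) := by
  rw [Tn, Matrix.diagonal_pow]
  have h : ((fun x => omega m ^ (x i).val) ^ l)
      = fun x : Fin n → ZMod 2 => omega m ^ ((x i).val * l) := by
    funext x; simp [Pi.pow_apply, pow_mul]
  rw [h]

end CXAux

namespace CXAux

variable {m n : ℕ}

lemma diag_congr {α : Type*} [DecidableEq α] {f g : α → ℂ} (h : ∀ x, f x = g x) :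
    Matrix.diagonal f = Matrix.diagonal g := congrArg _ (funext h)

lemma T_comm_T (i k : Fin n) (a b : ℕ) :
    Tn m n i ^ a * Tn m n k ^ b = Tn m n k ^ b * Tn m n i ^ a := by
  simp only [Tn_pow, Matrix.diagonal_mul_diagonal]
  exact diag_congr fun x => by ring

lemma T_mul_T (j : Fin n) (a b : ℕ) :
    Tn m n j ^ a * Tn m n j ^ b = Tn m n j ^ (a + b) := by
  rw [← pow_add]

lemma X_comm_T {k j : Fin n} (hkj : k ≠ j) (l : ℕ) :
    Xn n k * Tn m n j ^ l = Tn m n j ^ l * Xn n k := by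
  simp only [Tn_pow, Xn_pm, diagonal_mul_pm]
  refine congrArg (fun M => pm n _ * M) (diag_congr fun x => ?_)
  rw [Function.update_of_ne (Ne.symm hkj)]

lemma Xj_comm_T (hm : 0 < m) (j : Fin n) (l : ℕ) :
    Xn n j * Tn m n j ^ l = omega m ^ l • (Tn m n j ^ ((m-1)*l) * Xn n j) := by
  obtain ⟨m', rfl⟩ : ∃ m', m = m' + 1 := ⟨m - 1, by omega⟩
  simp only [Tn_pow, Xn_pm]
  ext x y
  rw [Matrix.smul_apply, Matrix.mul_diagonal, Matrix.diagonal_mul]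
  simp only [pm, Matrix.of_apply]
  by_cases h : x = Function.update y j (y j + 1)
  · rw [if_pos h, h, Function.update_self]
    rcases zmod2_cases (y j) with h2 | h2 <;> rw [h2]
    · simp only [zval0, zval01, Nat.zero_mul, Nat.one_mul, pow_zero, one_mul, mul_one,
        Nat.add_sub_cancel, smul_eq_mul]
      rw [← pow_add, show l + m' * l = (m' + 1) * l by ring, pow_mul,
        omega_pow_m (Nat.succ_pos m'), one_pow]
    · simp only [zval1, zval11, Nat.one_mul, Nat.zero_mul, pow_zero, one_mul, mul_one,
        smul_eq_mul]
  · rw [if_neg h]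
    simp [h]

lemma T_comm_CX {k i j : Fin n} (hkj : k ≠ j) (l : ℕ) :
    Tn m n k ^ l * CXn n i j = CXn n i j * Tn m n k ^ l := by
  simp only [Tn_pow, CXn_pm, diagonal_mul_pm]
  refine congrArg (fun M => pm n _ * M) (diag_congr fun x => ?_)
  rw [Function.update_of_ne hkj]

lemma TjK_comm_CX (hm : 0 < m) {i j : Fin n} (hij : i ≠ j) :
    Tn m n j ^ (m / Nat.gcd m 2) * CXn n i j
      = CXn n i j * (Tn m n i ^ (m / Nat.gcd m 2) * Tn m n j ^ (m / Nat.gcd m 2)) := by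
  simp only [Tn_pow, CXn_pm, diagonal_mul_pm, Matrix.diagonal_mul_diagonal]
  refine congrArg (fun M => pm n _ * M) (diag_congr fun x => ?_)
  rcases zmod2_cases (x i) with h1 | h1 <;> rcases zmod2_cases (x j) with h2 | h2 <;>
    rw [h1, h2] <;>
    simp only [Function.update_self, zval0, zval1, zval00, zval01, zval10, zval11, Nat.zero_mul, Nat.one_mul,
      pow_zero, one_mul, mul_one]
  rw [← pow_add, show m / Nat.gcd m 2 + m / Nat.gcd m 2 = 2 * (m / Nat.gcd m 2) by ring]
  exact (omega_pow_two_mul hm).symm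

end CXAux

namespace CXAux

variable {m n : ℕ}

@[simp] lemma ztwo' : (2 : ZMod 2) = 0 := rfl

lemma CX_sq {i j : Fin n} (hij : i ≠ j) : CXn n i j * CXn n i j = 1 := by
  rw [CXn_pm, pm_mul, ← pm_id]
  refine congrArg (pm n) (funext fun x => funext fun t => ?_)
  simp only [Function.comp_apply, Function.update_apply]
  split_ifs <;> simp_all <;> ring_nf <;> simp_all

lemma X_comm_CX {k i j : Fin n} (hki : k ≠ i) (hkj : k ≠ j) :
    Xn n k * CXn n i j = CXn n i j * Xn n k := by
  rw [Xn_pm, CXn_pm, pm_mul, pm_mul]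
  refine congrArg (pm n) (funext fun x => funext fun t => ?_)
  simp only [Function.comp_apply, Function.update_apply]
  split_ifs <;> simp_all <;> ring_nf <;> simp_all

lemma Xj_comm_CX {i j : Fin n} (hij : i ≠ j) :
    Xn n j * CXn n i j = CXn n i j * Xn n j := by
  rw [Xn_pm, CXn_pm, pm_mul, pm_mul]
  refine congrArg (pm n) (funext fun x => funext fun t => ?_)
  simp only [Function.comp_apply, Function.update_apply]
  split_ifs <;> simp_all <;> ring_nf <;> simp_all

lemma Xi_comm_CX {i j : Fin n} (hij : i ≠ j) :
    Xn n i * CXn n i j = CXn n i j * (Xn n i * Xn n j) := by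
  simp only [Xn_pm, CXn_pm, pm_mul]
  refine congrArg (pm n) (funext fun x => funext fun t => ?_)
  simp only [Function.comp_apply, Function.update_apply]
  split_ifs <;> simp_all <;> ring_nf <;> simp_all

end CXAux

namespace CXAux

variable {m n : ℕ}

abbrev Mat (n : ℕ) := Matrix (Fin n → ZMod 2) (Fin n → ZMod 2) ℂ

lemma step_X_other {k i j : Fin n} (hki : k ≠ i) (hkj : k ≠ j) (l : ℕ) (P : Mat n) :
    Xn n k * (Tn m n j ^ l * (CXn n i j * P))
      = Tn m n j ^ l * (CXn n i j * (Xn n k * P)) := by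
  rw [← mul_assoc, X_comm_T hkj, mul_assoc, ← mul_assoc (Xn n k),
    X_comm_CX hki hkj, mul_assoc]

lemma step_X_i {i j : Fin n} (hij : i ≠ j) (l : ℕ) (P : Mat n) :
    Xn n i * (Tn m n j ^ l * (CXn n i j * P))
      = Tn m n j ^ l * (CXn n i j * (Xn n i * (Xn n j * P))) := by
  rw [← mul_assoc, X_comm_T hij, mul_assoc, ← mul_assoc (Xn n i),
    Xi_comm_CX hij, mul_assoc, mul_assoc]

lemma step_X_j (hm : 0 < m) {i j : Fin n} (hij : i ≠ j) (l : ℕ) (P : Mat n) :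
    Xn n j * (Tn m n j ^ l * (CXn n i j * P))
      = omega m ^ l • (Tn m n j ^ ((m-1)*l) * (CXn n i j * (Xn n j * P))) := by
  rw [← mul_assoc, Xj_comm_T hm, Matrix.smul_mul, mul_assoc, ← mul_assoc (Xn n j),
    Xj_comm_CX hij, mul_assoc]

lemma step_T_other {k i j : Fin n} (hkj : k ≠ j) (p l : ℕ) (P : Mat n) :
    Tn m n k ^ p * (Tn m n j ^ l * (CXn n i j * P))
      = Tn m n j ^ l * (CXn n i j * (Tn m n k ^ p * P)) := by
  rw [← mul_assoc, T_comm_T, mul_assoc, ← mul_assoc (Tn m n k ^ p),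
    T_comm_CX hkj, mul_assoc]

lemma step_T_j {i j : Fin n} (p l : ℕ) (P : Mat n) :
    Tn m n j ^ p * (Tn m n j ^ l * (CXn n i j * P))
      = Tn m n j ^ (p + l) * (CXn n i j * P) := by
  rw [← mul_assoc, T_mul_T]

@[simp] lemma isCX_X (i : Fin n) : (GateCX.X i).isCX = false := rfl
@[simp] lemma isCX_T (i : Fin n) (l : ℕ) : (GateCX.Tpow i l).isCX = false := rfl
@[simp] lemma isCX_CX (i j : Fin n) (h : i ≠ j) : (GateCX.CX i j h).isCX = true := rfl

/-- Push a CX-free circuit from the left of a CX gate to its right,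
up to a phase and a power of `T_j`. -/
lemma push_lemma (hm : 0 < m) {i j : Fin n} (hij : i ≠ j) :
    ∀ A : List (GateCX n), (∀ g ∈ A, g.isCX = false) →
    ∃ (l : ℕ) (c : ℂ) (A' : List (GateCX n)), c ≠ 0 ∧ (∀ g ∈ A', g.isCX = false) ∧
      (A.map (GateCX.toMatrix m)).prod * CXn n i j
        = c • (Tn m n j ^ l * (CXn n i j * (A'.map (GateCX.toMatrix m)).prod)) := by
  intro A
  induction A with
  | nil =>
    intro _
    exact ⟨0, 1, [], one_ne_zero, by simp, by simp⟩
  | cons a A ih =>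
    intro hA
    obtain ⟨l, c, A', hc, hA', hEq⟩ := ih (fun g hg => hA g (List.mem_cons_of_mem _ hg))
    have h0 : ((a :: A).map (GateCX.toMatrix m)).prod * CXn n i j
        = c • (GateCX.toMatrix m a * (Tn m n j ^ l
            * (CXn n i j * (A'.map (GateCX.toMatrix m)).prod))) := by
      rw [List.map_cons, List.prod_cons, mul_assoc, hEq, Matrix.mul_smul]
    match a with
    | .CX i' j' h' =>
      have := hA _ List.mem_cons_self
      simp at this
    | .X k =>
      by_cases hkj : k = j
      · subst hkj
        refine ⟨(m-1)*l, c * omega m ^ l, .X k :: A', by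
          simp [hc, pow_ne_zero, omega_ne_zero], ?_, ?_⟩
        · intro g hg
          rcases List.mem_cons.mp hg with h | h
          · subst h; rfl
          · exact hA' g h
        · rw [h0, show GateCX.toMatrix m (GateCX.X k) = Xn n k from rfl,
            step_X_j hm hij, smul_smul, List.map_cons, List.prod_cons]
          rfl
      · by_cases hki : k = i
        · subst hki
          refine ⟨l, c, .X k :: .X j :: A', hc, ?_, ?_⟩
          · intro g hg
            rcases List.mem_cons.mp hg with h | h
            · subst h; rfl
            · rcases List.mem_cons.mp h with h | h
              · subst h; rfl
              · exact hA' g h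
          · rw [h0, show GateCX.toMatrix m (GateCX.X k) = Xn n k from rfl,
              step_X_i hij]
            simp [List.prod_cons, GateCX.toMatrix]
        · refine ⟨l, c, .X k :: A', hc, ?_, ?_⟩
          · intro g hg
            rcases List.mem_cons.mp hg with h | h
            · subst h; rfl
            · exact hA' g h
          · rw [h0, show GateCX.toMatrix m (GateCX.X k) = Xn n k from rfl,
              step_X_other hki hkj]
            simp [List.prod_cons, GateCX.toMatrix]
    | .Tpow k p =>
      by_cases hkj : k = j
      · subst hkj
        refine ⟨p + l, c, A', hc, hA', ?_⟩
        rw [h0, show GateCX.toMatrix m (GateCX.Tpow k p) = Tn m n k ^ p from rfl,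
          step_T_j]
      · refine ⟨l, c, .Tpow k p :: A', hc, ?_, ?_⟩
        · intro g hg
          rcases List.mem_cons.mp hg with h | h
          · subst h; rfl
          · exact hA' g h
        · rw [h0, show GateCX.toMatrix m (GateCX.Tpow k p) = Tn m n k ^ p from rfl,
            step_T_other hkj]
          simp [List.prod_cons, GateCX.toMatrix]

end CXAux

namespace CXAux

variable {m n : ℕ}

/-- Reduce the power of `T_j` in front of a CX gate below `m / gcd m 2`. -/
lemma reduce_lemma (hm : 0 < m) {i j : Fin n} (hij : i ≠ j) :
    ∀ l : ℕ, ∃ l' : ℕ, l' < m / Nat.gcd m 2 ∧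
      ∃ B : List (GateCX n), (∀ g ∈ B, g.isCX = false) ∧
        Tn m n j ^ l * CXn n i j
          = Tn m n j ^ l' * (CXn n i j * (B.map (GateCX.toMatrix m)).prod) := by
  have hK : 0 < m / Nat.gcd m 2 :=
    Nat.div_pos (Nat.le_of_dvd hm (Nat.gcd_dvd_left m 2)) (Nat.gcd_pos_of_pos_left _ hm)
  intro l
  induction l using Nat.strong_induction_on with
  | _ l ih =>
    by_cases h : l < m / Nat.gcd m 2
    · exact ⟨l, h, [], by simp, by simp⟩
    · set K := m / Nat.gcd m 2 with hKdef
      obtain ⟨l', hl', B, hB, hEq⟩ := ih (l - K) (by omega)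
      refine ⟨l', hl', B ++ [.Tpow i K, .Tpow j K], ?_, ?_⟩
      · intro g hg
        rcases List.mem_append.mp hg with h1 | h1
        · exact hB g h1
        · rcases List.mem_cons.mp h1 with h2 | h2
          · subst h2; rfl
          · rcases List.mem_cons.mp h2 with h3 | h3
            · subst h3; rfl
            · simp at h3
      · have hsplit : Tn m n j ^ l = Tn m n j ^ (l - K) * Tn m n j ^ K := by
          rw [← pow_add]
          congr 1
          omega
        rw [hsplit, mul_assoc, TjK_comm_CX hm hij, ← mul_assoc, hEq]
        rw [List.map_append, List.prod_append]
        simp only [List.map_cons, List.map_nil, List.prod_cons, List.prod_nil,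
          GateCX.toMatrix, mul_one]
        rw [mul_assoc, mul_assoc]

/-- Split a list at its first CX gate. -/
lemma split_lemma :
    ∀ (L : List (GateCX n)) (r : ℕ), L.countP (fun g => g.isCX) = r + 1 →
    ∃ A g B, L = A ++ g :: B ∧ (∀ x ∈ A, GateCX.isCX x = false) ∧ g.isCX = true ∧
      B.countP (fun g => g.isCX) = r := by
  intro L
  induction L with
  | nil => intro r h; simp at h
  | cons a L ih =>
    intro r h
    rw [List.countP_cons] at h
    by_cases ha : a.isCX
    · refine ⟨[], a, L, rfl, by simp, ha, ?_⟩
      simp [ha] at h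
      omega
    · simp [ha] at h
      obtain ⟨A, g, B, h1, h2, h3, h4⟩ := ih r h
      refine ⟨a :: A, g, B, by rw [h1]; rfl, ?_, h3, h4⟩
      intro x hx
      rcases List.mem_cons.mp hx with h5 | h5
      · subst h5; simpa using ha
      · exact h2 x h5

/-- Normal form for members of `Fset m n (r+1)`. -/
lemma mem_succ_normal (hm : 0 < m) {r : ℕ} {U : Mat n} (hU : U ∈ Fset m n (r+1)) :
    ∃ (i j : Fin n) (_ : i ≠ j) (l : ℕ), l < m / Nat.gcd m 2 ∧
      ∃ W ∈ Fset m n r, ∃ c : ℂ, c ≠ 0 ∧ U = c • (Tn m n j ^ l * (CXn n i j * W)) := by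
  obtain ⟨L, hL, hcount⟩ := hU
  obtain ⟨A, g, B, rfl, hA, hg, hB⟩ := split_lemma L r hcount
  match g, hg with
  | .CX i j hij, _ =>
    obtain ⟨l, c, A', hc, hA', hEq⟩ := push_lemma hm hij A hA
    obtain ⟨l', hl', B', hB', hEq2⟩ := reduce_lemma hm hij l
    refine ⟨i, j, hij, l', hl', ((B' ++ A' ++ B).map (GateCX.toMatrix m)).prod, ?_, c, hc, ?_⟩
    · refine ⟨B' ++ A' ++ B, rfl, ?_⟩
      rw [List.countP_append, List.countP_append]
      rw [List.countP_eq_zero.mpr (by intro g hg'; simp [hB' g hg']),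
        List.countP_eq_zero.mpr (by intro g hg'; simp [hA' g hg'])]
      simpa using hB
    · rw [← hL, List.map_append, List.prod_append, List.map_cons, List.prod_cons]
      rw [show GateCX.toMatrix m (GateCX.CX i j hij) = CXn n i j from rfl]
      rw [← mul_assoc, hEq, Matrix.smul_mul]
      congr 1
      rw [← mul_assoc (Tn m n j ^ l), hEq2]
      rw [List.map_append, List.map_append, List.prod_append, List.prod_append]
      simp only [mul_assoc]

end CXAux

namespace CXAux

variable {m n : ℕ}

lemma phase_equivalence (m n r : ℕ) :
    Equivalence (fun (U V : Fset m n r) => PhaseEq U.1 V.1) := by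
  constructor
  · intro U; exact ⟨1, one_ne_zero, (one_smul _ _).symm⟩
  · rintro U V ⟨c, hc, h⟩
    exact ⟨c⁻¹, inv_ne_zero hc, by rw [h, smul_smul, inv_mul_cancel₀ hc, one_smul]⟩
  · rintro U V W ⟨c, hc, h⟩ ⟨d, hd, h2⟩
    exact ⟨c * d, mul_ne_zero hc hd, by rw [h, h2, smul_smul]⟩

lemma normal_mem {r : ℕ} {i j : Fin n} (hij : i ≠ j) (l : ℕ) {W : Mat n}
    (hW : W ∈ Fset m n r) : Tn m n j ^ l * (CXn n i j * W) ∈ Fset m n (r+1) := by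
  obtain ⟨L, hL, hc⟩ := hW
  refine ⟨.Tpow j l :: .CX i j hij :: L, ?_, ?_⟩
  · simp only [List.map_cons, List.prod_cons, hL]; rfl
  · rw [List.countP_cons, List.countP_cons]
    simp [hc]

lemma cx_mem {r : ℕ} {i j : Fin n} (hij : i ≠ j) {W : Mat n}
    (hW : W ∈ Fset m n r) : CXn n i j * W ∈ Fset m n (r+1) := by
  obtain ⟨L, hL, hc⟩ := hW
  refine ⟨.CX i j hij :: L, ?_, ?_⟩
  · simp only [List.map_cons, List.prod_cons, hL]; rfl
  · rw [List.countP_cons]; simp [hc]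

lemma card_pairs (n : ℕ) :
    Nat.card {p : Fin n × Fin n // p.1 ≠ p.2} = n ^ 2 - n := by
  have e2 : {p : Fin n × Fin n // p.1 = p.2} ⊕ {p : Fin n × Fin n // ¬ p.1 = p.2}
      ≃ Fin n × Fin n := Equiv.sumCompl _
  have e : {p : Fin n × Fin n // p.1 = p.2} ≃ Fin n :=
    { toFun := fun x => x.1.1
      invFun := fun a => ⟨(a, a), rfl⟩
      left_inv := by rintro ⟨⟨a, b⟩, (h : a = b)⟩; subst h; rfl
      right_inv := fun a => rfl }
  have h3 := Nat.card_congr e2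
  rw [Nat.card_sum, Nat.card_prod, Nat.card_congr e] at h3
  have hn : Nat.card (Fin n) = n := Nat.card_eq_fintype_card.trans (Fintype.card_fin n)
  rw [hn] at h3
  have : Nat.card {p : Fin n × Fin n // p.1 ≠ p.2}
      = Nat.card {p : Fin n × Fin n // ¬ p.1 = p.2} := rfl
  rw [this]
  have hsq : n ^ 2 = n * n := sq n
  omega

end CXAux


set_option maxHeartbeats 1000000 in
theorem F_succ_card_bound (m n : ℕ) (hm : 0 < m) (hn : 0 < n) (r : ℕ) :
    Nat.card (Quot (fun (U V : Fset m n (r + 1)) => PhaseEq U.1 V.1)) ≤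
      m * (n ^ 2 - n) / Nat.gcd m 2 *
        Nat.card (Quot (fun (U V : Fset m n r) => PhaseEq U.1 V.1)) := by
  classical
  set K := m / Nat.gcd m 2 with hK
  set rel1 := fun (U V : Fset m n (r+1)) => PhaseEq U.1 V.1 with hrel1
  set relr := fun (U V : Fset m n r) => PhaseEq U.1 V.1 with hrelr
  rcases finite_or_infinite (Quot relr) with hfin | hinf
  · haveI := hfin
    let g : Fin K → {p : Fin n × Fin n // p.1 ≠ p.2} → ↥(Fset m n r) → Quot rel1 :=
      fun l p W => Quot.mk rel1
        ⟨Tn m n p.1.2 ^ (l : ℕ) * (CXn n p.1.1 p.1.2 * W.1), CXAux.normal_mem p.2 _ W.2⟩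
    have hg : ∀ l p (W V : ↥(Fset m n r)), relr W V → g l p W = g l p V := by
      rintro l p W V ⟨c, hc, hWV⟩
      apply Quot.sound
      refine ⟨c, hc, ?_⟩
      show Tn m n p.1.2 ^ (l : ℕ) * (CXn n p.1.1 p.1.2 * W.1)
        = c • (Tn m n p.1.2 ^ (l : ℕ) * (CXn n p.1.1 p.1.2 * V.1))
      rw [hWV, Matrix.mul_smul, Matrix.mul_smul]
    let G : Fin K × {p : Fin n × Fin n // p.1 ≠ p.2} × Quot relr → Quot rel1 :=
      fun t => Quot.lift (g t.1 t.2.1) (hg t.1 t.2.1) t.2.2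
    have hsurj : Function.Surjective G := by
      intro q
      obtain ⟨⟨U, hU⟩, rfl⟩ := Quot.exists_rep q
      obtain ⟨i, j, hij, l, hl, W, hW, c, hc, hUeq⟩ := CXAux.mem_succ_normal hm hU
      refine ⟨⟨⟨l, hl⟩, ⟨(i, j), hij⟩, Quot.mk relr ⟨W, hW⟩⟩, ?_⟩
      show g ⟨l, hl⟩ ⟨(i, j), hij⟩ ⟨W, hW⟩ = Quot.mk rel1 ⟨U, hU⟩
      apply Quot.sound
      refine ⟨c⁻¹, inv_ne_zero hc, ?_⟩
      show Tn m n j ^ l * (CXn n i j * W) = c⁻¹ • U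
      rw [hUeq, smul_smul, inv_mul_cancel₀ hc, one_smul]
    have hcard := Nat.card_le_card_of_surjective G hsurj
    refine le_trans hcard ?_
    rw [Nat.card_prod, Nat.card_prod, Nat.card_eq_fintype_card (α := Fin K),
      Fintype.card_fin, CXAux.card_pairs, ← mul_assoc]
    have harith : K * (n ^ 2 - n) = m * (n ^ 2 - n) / Nat.gcd m 2 := by
      rw [hK, mul_comm m, Nat.mul_div_assoc _ (Nat.gcd_dvd_left m 2), mul_comm]
    rw [harith]
  · haveI := hinf
    rw [Nat.card_eq_zero.mpr (Or.inr hinf), mul_zero, Nat.le_zero, Nat.card_eq_zero]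
    by_cases hne : Nonempty (Quot rel1)
    · right
      obtain ⟨q⟩ := hne
      obtain ⟨⟨U, hU⟩, -⟩ := Quot.exists_rep q
      obtain ⟨i, j, hij, -, -, -, -, -, -, -⟩ := CXAux.mem_succ_normal hm hU
      have hF : ∀ (W V : ↥(Fset m n r)), relr W V →
          (Quot.mk rel1 ⟨CXn n i j * W.1, CXAux.cx_mem hij W.2⟩)
            = Quot.mk rel1 ⟨CXn n i j * V.1, CXAux.cx_mem hij V.2⟩ := by
        rintro W V ⟨c, hc, h⟩
        apply Quot.sound
        refine ⟨c, hc, ?_⟩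
        show CXn n i j * W.1 = c • (CXn n i j * V.1)
        rw [h, Matrix.mul_smul]
      let F : Quot relr → Quot rel1 :=
        Quot.lift (fun W => Quot.mk rel1 ⟨CXn n i j * W.1, CXAux.cx_mem hij W.2⟩) hF
      have hinj : Function.Injective F := by
        intro q1 q2 h
        obtain ⟨W, rfl⟩ := Quot.exists_rep q1
        obtain ⟨V, rfl⟩ := Quot.exists_rep q2
        have h2 : PhaseEq (CXn n i j * W.1) (CXn n i j * V.1) :=
          ((CXAux.phase_equivalence m n (r+1)).eqvGen_iff).mp (Quot.eq.mp h)
        obtain ⟨c, hc, hEq⟩ := h2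
        apply Quot.sound
        refine ⟨c, hc, ?_⟩
        have h4 : CXn n i j * (CXn n i j * W.1)
            = CXn n i j * (c • (CXn n i j * V.1)) := by rw [hEq]
        rwa [← mul_assoc, CXAux.CX_sq hij, one_mul, Matrix.mul_smul, ← mul_assoc,
          CXAux.CX_sq hij, one_mul] at h4
      exact Infinite.of_injective F hinj
    · left; exact not_nonempty_iff.mp hne


end
end

section
/- Any element of the two-qubit CNOT-Dihedral group which has exactly one CS gate and one CX gate can be rewritten with no CS gates and exactly one CX gate: if a 4×4 matrix U is a product of a list of matrices, each entry being X₀, X₁, a power of T₀ or T₁, CX₀₁, CX₁₀, CS, or CS^{−1}, in which exactly one entry is CS or CS^{−1} and exactly one entry is CX₀₁ or CX₁₀, then U is phase-equivalent to a product of a list of matrices, each entry being X₀, X₁, a power of T₀ or T₁, CX₀₁, or CX₁₀, in which exactly one entry is CX₀₁ or CX₁₀ and no entry is CS or CS^{−1}. -/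
open Matrix Kronecker

noncomputable section

/-- A gate of a two-qubit CNOT-Dihedral circuit: X₀, X₁, a power of T₀ or T₁,
CX₀₁, CX₁₀, CS, or CS⁻¹. -/
inductive GateAll where
  | X0 | X1
  | T0pow (l : ℕ)
  | T1pow (l : ℕ)
  | CX01 | CX10
  | CS | CSinv

/-- The matrix of a gate. -/
def GateAll.toMatrix (m : ℕ) : GateAll → Matrix (Fin 4) (Fin 4) ℂ
  | .X0 => _root_.X0
  | .X1 => _root_.X1
  | .T0pow l => T0 m ^ l
  | .T1pow l => T1 m ^ l
  | .CX01 => _root_.CX01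
  | .CX10 => _root_.CX10
  | .CS => CSg m
  | .CSinv => CSginv m

/-- Whether a gate is a CS or CS⁻¹ gate. -/
def GateAll.isCS : GateAll → Bool
  | .CS => true
  | .CSinv => true
  | _ => false

/-- Whether a gate is a CX gate. -/
def GateAll.isCX : GateAll → Bool
  | .CX01 => true
  | .CX10 => true
  | _ => false

/-! ### Auxiliary machinery -/

section AuxMatrices

lemma omega_pow_m {m : ℕ} (hm : 0 < m) : omega m ^ m = 1 := by
  unfold omega
  rw [← Complex.exp_nat_mul]
  have hmc : (m : ℂ) ≠ 0 := Nat.cast_ne_zero.mpr hm.ne'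
  rw [show (m : ℂ) * (2 * Real.pi * Complex.I / m) = 2 * Real.pi * Complex.I by
    field_simp]
  exact Complex.exp_two_pi_mul_I

lemma w1 {m : ℕ} (hm : 0 < m) : omega m ^ (m - 1) * omega m = 1 := by
  rw [← pow_succ, show m - 1 + 1 = m by omega, omega_pow_m hm]

lemma w2 {m : ℕ} (hm : 0 < m) : omega m ^ (2 * m - 2) * omega m ^ 2 = 1 := by
  rw [← pow_add, show 2 * m - 2 + 2 = m + m by omega, pow_add, omega_pow_m hm, one_mul]

lemma w3 {m : ℕ} (hm : 0 < m) : (omega m ^ 2)⁻¹ = omega m ^ (2 * m - 2) :=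
  inv_eq_of_mul_eq_one_right (by rw [mul_comm]; exact w2 hm)

lemma w4 (m : ℕ) : omega m ^ 2 * (omega m ^ 2)⁻¹ = 1 :=
  mul_inv_cancel₀ (pow_ne_zero _ (omega_ne_zero m))

lemma w5 (m : ℕ) : (omega m ^ 2)⁻¹ * omega m ^ 2 = 1 :=
  inv_mul_cancel₀ (pow_ne_zero _ (omega_ne_zero m))

lemma fp00 : (finProdFinEquiv ((0 : Fin 2), (0 : Fin 2)) : Fin 4) = 0 := rfl
lemma fp01 : (finProdFinEquiv ((0 : Fin 2), (1 : Fin 2)) : Fin 4) = 1 := rfl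
lemma fp10 : (finProdFinEquiv ((1 : Fin 2), (0 : Fin 2)) : Fin 4) = 2 := rfl
lemma fp11 : (finProdFinEquiv ((1 : Fin 2), (1 : Fin 2)) : Fin 4) = 3 := rfl

lemma kron_apply' (A B : Matrix (Fin 2) (Fin 2) ℂ) (a b c d : Fin 2) :
    kron A B (finProdFinEquiv (a, c)) (finProdFinEquiv (b, d)) = A a b * B c d := by
  simp [kron]

lemma X0ex : X0 = !![0,0,1,0;0,0,0,1;1,0,0,0;0,1,0,0] := by
  ext i j
  obtain ⟨⟨a, c⟩, rfl⟩ := (finProdFinEquiv (m := 2) (n := 2)).surjective i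
  obtain ⟨⟨b, d⟩, rfl⟩ := (finProdFinEquiv (m := 2) (n := 2)).surjective j
  rw [X0, kron_apply']
  fin_cases a <;> fin_cases b <;> fin_cases c <;> fin_cases d <;>
    · simp only [Fin.mk_zero, Fin.mk_one, fp00, fp01, fp10, fp11]
      simp [Xg, Matrix.one_apply, Matrix.vecHead, Matrix.vecTail]

lemma X1ex : X1 = !![0,1,0,0;1,0,0,0;0,0,0,1;0,0,1,0] := by
  ext i j
  obtain ⟨⟨a, c⟩, rfl⟩ := (finProdFinEquiv (m := 2) (n := 2)).surjective i
  obtain ⟨⟨b, d⟩, rfl⟩ := (finProdFinEquiv (m := 2) (n := 2)).surjective j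
  rw [X1, kron_apply']
  fin_cases a <;> fin_cases b <;> fin_cases c <;> fin_cases d <;>
    · simp only [Fin.mk_zero, Fin.mk_one, fp00, fp01, fp10, fp11]
      simp [Xg, Matrix.one_apply, Matrix.vecHead, Matrix.vecTail]

lemma T0ex (m : ℕ) : T0 m = !![1,0,0,0;0,1,0,0;0,0,omega m,0;0,0,0,omega m] := by
  ext i j
  obtain ⟨⟨a, c⟩, rfl⟩ := (finProdFinEquiv (m := 2) (n := 2)).surjective i
  obtain ⟨⟨b, d⟩, rfl⟩ := (finProdFinEquiv (m := 2) (n := 2)).surjective j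
  rw [T0, kron_apply']
  fin_cases a <;> fin_cases b <;> fin_cases c <;> fin_cases d <;>
    · simp only [Fin.mk_zero, Fin.mk_one, fp00, fp01, fp10, fp11]
      simp [Tg, Matrix.one_apply, Matrix.vecHead, Matrix.vecTail]

lemma T1ex (m : ℕ) : T1 m = !![1,0,0,0;0,omega m,0,0;0,0,1,0;0,0,0,omega m] := by
  ext i j
  obtain ⟨⟨a, c⟩, rfl⟩ := (finProdFinEquiv (m := 2) (n := 2)).surjective i
  obtain ⟨⟨b, d⟩, rfl⟩ := (finProdFinEquiv (m := 2) (n := 2)).surjective j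
  rw [T1, kron_apply']
  fin_cases a <;> fin_cases b <;> fin_cases c <;> fin_cases d <;>
    · simp only [Fin.mk_zero, Fin.mk_one, fp00, fp01, fp10, fp11]
      simp [Tg, Matrix.one_apply, Matrix.vecHead, Matrix.vecTail]

lemma CSex (m : ℕ) :
    CSg m = !![1,0,0,0;0,1,0,0;0,0,1,0;0,0,0,omega m ^ 2] := by
  ext i j
  fin_cases i <;> fin_cases j <;>
    simp [CSg, Matrix.diagonal, Matrix.vecHead, Matrix.vecTail]

lemma CSiex (m : ℕ) :
    CSginv m = !![1,0,0,0;0,1,0,0;0,0,1,0;0,0,0,(omega m ^ 2)⁻¹] := by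
  ext i j
  fin_cases i <;> fin_cases j <;>
    simp [CSginv, Matrix.diagonal, Matrix.vecHead, Matrix.vecTail]

lemma one_fin_four : (1 : Matrix (Fin 4) (Fin 4) ℂ) =
    !![1,0,0,0;0,1,0,0;0,0,1,0;0,0,0,1] := by
  ext i j
  fin_cases i <;> fin_cases j <;>
    simp [Matrix.one_apply, Matrix.vecHead, Matrix.vecTail]

lemma mul_fin_four
    (a₁₁ a₁₂ a₁₃ a₁₄ a₂₁ a₂₂ a₂₃ a₂₄ a₃₁ a₃₂ a₃₃ a₃₄ a₄₁ a₄₂ a₄₃ a₄₄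
     b₁₁ b₁₂ b₁₃ b₁₄ b₂₁ b₂₂ b₂₃ b₂₄ b₃₁ b₃₂ b₃₃ b₃₄ b₄₁ b₄₂ b₄₃ b₄₄ : ℂ) :
    !![a₁₁, a₁₂, a₁₃, a₁₄; a₂₁, a₂₂, a₂₃, a₂₄; a₃₁, a₃₂, a₃₃, a₃₄; a₄₁, a₄₂, a₄₃, a₄₄] *
    !![b₁₁, b₁₂, b₁₃, b₁₄; b₂₁, b₂₂, b₂₃, b₂₄; b₃₁, b₃₂, b₃₃, b₃₄; b₄₁, b₄₂, b₄₃, b₄₄] =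
    !![a₁₁*b₁₁ + a₁₂*b₂₁ + a₁₃*b₃₁ + a₁₄*b₄₁, a₁₁*b₁₂ + a₁₂*b₂₂ + a₁₃*b₃₂ + a₁₄*b₄₂,
       a₁₁*b₁₃ + a₁₂*b₂₃ + a₁₃*b₃₃ + a₁₄*b₄₃, a₁₁*b₁₄ + a₁₂*b₂₄ + a₁₃*b₃₄ + a₁₄*b₄₄;
       a₂₁*b₁₁ + a₂₂*b₂₁ + a₂₃*b₃₁ + a₂₄*b₄₁, a₂₁*b₁₂ + a₂₂*b₂₂ + a₂₃*b₃₂ + a₂₄*b₄₂,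
       a₂₁*b₁₃ + a₂₂*b₂₃ + a₂₃*b₃₃ + a₂₄*b₄₃, a₂₁*b₁₄ + a₂₂*b₂₄ + a₂₃*b₃₄ + a₂₄*b₄₄;
       a₃₁*b₁₁ + a₃₂*b₂₁ + a₃₃*b₃₁ + a₃₄*b₄₁, a₃₁*b₁₂ + a₃₂*b₂₂ + a₃₃*b₃₂ + a₃₄*b₄₂,
       a₃₁*b₁₃ + a₃₂*b₂₃ + a₃₃*b₃₃ + a₃₄*b₄₃, a₃₁*b₁₄ + a₃₂*b₂₄ + a₃₃*b₃₄ + a₃₄*b₄₄;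
       a₄₁*b₁₁ + a₄₂*b₂₁ + a₄₃*b₃₁ + a₄₄*b₄₁, a₄₁*b₁₂ + a₄₂*b₂₂ + a₄₃*b₃₂ + a₄₄*b₄₂,
       a₄₁*b₁₃ + a₄₂*b₂₃ + a₄₃*b₃₃ + a₄₄*b₄₃, a₄₁*b₁₄ + a₄₂*b₂₄ + a₄₃*b₃₄ + a₄₄*b₄₄] := by
  ext i j
  fin_cases i <;> fin_cases j <;>
    simp [Matrix.mul_apply, Fin.sum_univ_four, Matrix.vecHead, Matrix.vecTail, ← add_assoc]

lemma T0powex (m l : ℕ) :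
    T0 m ^ l = !![1,0,0,0;0,1,0,0;0,0,omega m ^ l,0;0,0,0,omega m ^ l] := by
  induction l with
  | zero => simp [one_fin_four]
  | succ k ih =>
    rw [pow_succ, ih, T0ex, mul_fin_four]
    norm_num [pow_succ]

lemma T1powex (m l : ℕ) :
    T1 m ^ l = !![1,0,0,0;0,omega m ^ l,0,0;0,0,1,0;0,0,0,omega m ^ l] := by
  induction l with
  | zero => simp [one_fin_four]
  | succ k ih =>
    rw [pow_succ, ih, T1ex, mul_fin_four]
    norm_num [pow_succ]

end AuxMatrices
section Identities
variable {m : ℕ}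

-- CS/CSinv commute with powers of T0 and T1 (all diagonal)
lemma csT0 (hm : 0 < m) (l : ℕ) : CSg m * T0 m ^ l = T0 m ^ l * CSg m := by
  rw [CSex, T0powex, mul_fin_four, mul_fin_four]; ring_nf

lemma csT1 (hm : 0 < m) (l : ℕ) : CSg m * T1 m ^ l = T1 m ^ l * CSg m := by
  rw [CSex, T1powex, mul_fin_four, mul_fin_four]; ring_nf

lemma csiT0 (hm : 0 < m) (l : ℕ) : CSginv m * T0 m ^ l = T0 m ^ l * CSginv m := by
  rw [CSiex, T0powex, mul_fin_four, mul_fin_four]; ring_nf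

lemma csiT1 (hm : 0 < m) (l : ℕ) : CSginv m * T1 m ^ l = T1 m ^ l * CSginv m := by
  rw [CSiex, T1powex, mul_fin_four, mul_fin_four]; ring_nf

-- CS/CSinv through X0/X1
lemma csX0 (hm : 0 < m) : CSg m * X0 = X0 * (T1 m ^ 2 * CSginv m) := by
  rw [CSex, CSiex, X0ex, T1powex, mul_fin_four, mul_fin_four, mul_fin_four]
  norm_num [w4 m]

lemma csiX0 (hm : 0 < m) : CSginv m * X0 = X0 * (T1 m ^ (2 * m - 2) * CSg m) := by
  rw [CSex, CSiex, X0ex, T1powex, mul_fin_four, mul_fin_four, mul_fin_four]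
  norm_num [w2 hm, w3 hm]

lemma csX1 (hm : 0 < m) : CSg m * X1 = X1 * (T0 m ^ 2 * CSginv m) := by
  rw [CSex, CSiex, X1ex, T0powex, mul_fin_four, mul_fin_four, mul_fin_four]
  norm_num [w4 m]

lemma csiX1 (hm : 0 < m) : CSginv m * X1 = X1 * (T0 m ^ (2 * m - 2) * CSg m) := by
  rw [CSex, CSiex, X1ex, T0powex, mul_fin_four, mul_fin_four, mul_fin_four]
  norm_num [w2 hm, w3 hm]

-- CS/CSinv merged into CX
lemma csCX01 (hm : 0 < m) :
    CSg m * CX01 = T1 m ^ 1 * (CX01 * (T0 m ^ 1 * T1 m ^ (m - 1))) := by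
  have h : omega m * omega m ^ (m - 1) = 1 := by rw [mul_comm]; exact w1 hm
  simp only [CSex, CX01, T0powex, T1powex, mul_fin_four]
  norm_num [pow_one]
  exact ⟨h.symm, pow_two _⟩

lemma csiCX01 (hm : 0 < m) :
    CSginv m * CX01 = T1 m ^ (m - 1) * (CX01 * (T0 m ^ (m - 1) * T1 m ^ 1)) := by
  have h : omega m ^ (m - 1) * omega m = 1 := w1 hm
  have h2 : omega m * omega m ^ (m - 1) = 1 := by rw [mul_comm]; exact w1 hm
  have h3 : (omega m ^ 2)⁻¹ = omega m ^ (m - 1) * omega m ^ (m - 1) := by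
    rw [w3 hm, ← pow_add, show m - 1 + (m - 1) = 2 * m - 2 by omega]
  simp only [CSiex, CX01, T0powex, T1powex, mul_fin_four]
  norm_num [pow_one]
  exact ⟨h.symm, h3⟩

lemma csCX10 (hm : 0 < m) :
    CSg m * CX10 = T0 m ^ 1 * (CX10 * (T0 m ^ (m - 1) * T1 m ^ 1)) := by
  have h : omega m * omega m ^ (m - 1) = 1 := by rw [mul_comm]; exact w1 hm
  simp only [CSex, CX10, T0powex, T1powex, mul_fin_four]
  norm_num [pow_one]
  exact ⟨(w1 hm).symm, h.symm, pow_two _⟩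

lemma csiCX10 (hm : 0 < m) :
    CSginv m * CX10 = T0 m ^ (m - 1) * (CX10 * (T0 m ^ 1 * T1 m ^ (m - 1))) := by
  have h : omega m ^ (m - 1) * omega m = 1 := w1 hm
  have h2 : omega m * omega m ^ (m - 1) = 1 := by rw [mul_comm]; exact w1 hm
  have h3 : (omega m ^ 2)⁻¹ = omega m ^ (m - 1) * omega m ^ (m - 1) := by
    rw [w3 hm, ← pow_add, show m - 1 + (m - 1) = 2 * m - 2 by omega]
  simp only [CSiex, CX10, T0powex, T1powex, mul_fin_four]
  norm_num [pow_one]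
  exact ⟨h2.symm, h.symm, h3⟩

end Identities
section ListMachinery

lemma tmat (m : ℕ) (g : GateAll) : (g.toMatrix m)ᵀ = g.toMatrix m := by
  cases g with
  | X0 =>
    show X0ᵀ = X0
    rw [X0ex]; ext i j; fin_cases i <;> fin_cases j <;> rfl
  | X1 =>
    show X1ᵀ = X1
    rw [X1ex]; ext i j; fin_cases i <;> fin_cases j <;> rfl
  | T0pow l =>
    show ((T0 m ^ l)ᵀ = T0 m ^ l)
    rw [Matrix.transpose_pow]
    congr 1
    rw [T0ex]; ext i j; fin_cases i <;> fin_cases j <;> rfl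
  | T1pow l =>
    show ((T1 m ^ l)ᵀ = T1 m ^ l)
    rw [Matrix.transpose_pow]
    congr 1
    rw [T1ex]; ext i j; fin_cases i <;> fin_cases j <;> rfl
  | CX01 =>
    show CX01ᵀ = CX01
    rw [CX01]; ext i j; fin_cases i <;> fin_cases j <;> rfl
  | CX10 =>
    show CX10ᵀ = CX10
    rw [CX10]; ext i j; fin_cases i <;> fin_cases j <;> rfl
  | CS => exact Matrix.diagonal_transpose _
  | CSinv => exact Matrix.diagonal_transpose _

lemma prod_rev (m : ℕ) (L : List GateAll) :
    ((L.reverse.map (GateAll.toMatrix m)).prod) = ((L.map (GateAll.toMatrix m)).prod)ᵀ := by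
  induction L with
  | nil => simp
  | cons g rest ih =>
    rw [List.map_reverse] at ih
    simp [List.reverse_cons, List.map_append, List.prod_append, ih,
      Matrix.transpose_mul, tmat]

lemma step_local (m : ℕ) (rest : List GateAll) (s s' g e : GateAll)
    (hs' : s'.isCS = true)
    (hg1 : g.isCS = false) (hg2 : g.isCX = false)
    (he1 : e.isCS = false) (he2 : e.isCX = false)
    (hid : s.toMatrix m * g.toMatrix m = g.toMatrix m * (e.toMatrix m * s'.toMatrix m))
    (IH : ∀ s₀ : GateAll, s₀.isCS = true →
      ∃ L' : List GateAll, L'.countP (fun g => g.isCS) = 0 ∧ L'.countP (fun g => g.isCX) = 1 ∧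
        ((s₀ :: rest).map (GateAll.toMatrix m)).prod = (L'.map (GateAll.toMatrix m)).prod) :
    ∃ L' : List GateAll, L'.countP (fun g => g.isCS) = 0 ∧ L'.countP (fun g => g.isCX) = 1 ∧
      ((s :: g :: rest).map (GateAll.toMatrix m)).prod = (L'.map (GateAll.toMatrix m)).prod := by
  obtain ⟨L'', c1, c2, heq⟩ := IH s' hs'
  refine ⟨g :: e :: L'', ?_, ?_, ?_⟩
  · simp [List.countP_cons, hg1, he1, c1]
  · simp [List.countP_cons, hg2, he2, c2]
  · simp only [List.map_cons, List.prod_cons] at heq ⊢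
    rw [← mul_assoc, hid]
    simp only [mul_assoc]
    rw [heq]

lemma step_cx (m : ℕ) (rest : List GateAll) (s g d1 d2 d3 : GateAll)
    (hg1 : g.isCS = false) (hg2 : g.isCX = true)
    (hd11 : d1.isCS = false) (hd12 : d1.isCX = false)
    (hd21 : d2.isCS = false) (hd22 : d2.isCX = false)
    (hd31 : d3.isCS = false) (hd32 : d3.isCX = false)
    (hr0 : rest.countP (fun g => g.isCS) = 0) (hr1 : rest.countP (fun g => g.isCX) = 0)
    (hid : s.toMatrix m * g.toMatrix m
        = d1.toMatrix m * (g.toMatrix m * (d2.toMatrix m * d3.toMatrix m))) :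
    ∃ L' : List GateAll, L'.countP (fun g => g.isCS) = 0 ∧ L'.countP (fun g => g.isCX) = 1 ∧
      ((s :: g :: rest).map (GateAll.toMatrix m)).prod = (L'.map (GateAll.toMatrix m)).prod := by
  refine ⟨d1 :: g :: d2 :: d3 :: rest, ?_, ?_, ?_⟩
  · simp [List.countP_cons, hg1, hd11, hd21, hd31, hr0]
  · simp [List.countP_cons, hg2, hd12, hd22, hd32, hr1]
  · simp only [List.map_cons, List.prod_cons]
    rw [← mul_assoc, hid]
    simp only [mul_assoc]

lemma elim (m : ℕ) (hm : 0 < m) :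
    ∀ (L : List GateAll) (s : GateAll), s.isCS = true →
      L.countP (fun g => g.isCS) = 0 → L.countP (fun g => g.isCX) = 1 →
      ∃ L' : List GateAll, L'.countP (fun g => g.isCS) = 0 ∧ L'.countP (fun g => g.isCX) = 1 ∧
        ((s :: L).map (GateAll.toMatrix m)).prod = (L'.map (GateAll.toMatrix m)).prod := by
  intro L
  induction L with
  | nil => intro s hs h0 h1; simp at h1
  | cons g rest ih =>
    intro s hs h0 h1
    rw [List.countP_cons] at h0 h1
    cases g with
    | X0 =>
      have hr0 : rest.countP (fun g => g.isCS) = 0 := by simpa [GateAll.isCS] using h0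
      have hr1 : rest.countP (fun g => g.isCX) = 1 := by simpa [GateAll.isCX] using h1
      have IH' := fun s₀ hs₀ => ih s₀ hs₀ hr0 hr1
      cases s with
      | CS => exact step_local m rest .CS .CSinv .X0 (.T1pow 2) rfl rfl rfl rfl rfl (csX0 hm) IH'
      | CSinv =>
        exact step_local m rest .CSinv .CS .X0 (.T1pow (2 * m - 2)) rfl rfl rfl rfl rfl
          (csiX0 hm) IH'
      | _ => simp [GateAll.isCS] at hs
    | X1 =>
      have hr0 : rest.countP (fun g => g.isCS) = 0 := by simpa [GateAll.isCS] using h0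
      have hr1 : rest.countP (fun g => g.isCX) = 1 := by simpa [GateAll.isCX] using h1
      have IH' := fun s₀ hs₀ => ih s₀ hs₀ hr0 hr1
      cases s with
      | CS => exact step_local m rest .CS .CSinv .X1 (.T0pow 2) rfl rfl rfl rfl rfl (csX1 hm) IH'
      | CSinv =>
        exact step_local m rest .CSinv .CS .X1 (.T0pow (2 * m - 2)) rfl rfl rfl rfl rfl
          (csiX1 hm) IH'
      | _ => simp [GateAll.isCS] at hs
    | T0pow l =>
      have hr0 : rest.countP (fun g => g.isCS) = 0 := by simpa [GateAll.isCS] using h0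
      have hr1 : rest.countP (fun g => g.isCX) = 1 := by simpa [GateAll.isCX] using h1
      have IH' := fun s₀ hs₀ => ih s₀ hs₀ hr0 hr1
      cases s with
      | CS =>
        refine step_local m rest .CS .CS (.T0pow l) (.T0pow 0) rfl rfl rfl rfl rfl ?_ IH'
        show CSg m * T0 m ^ l = T0 m ^ l * (T0 m ^ 0 * CSg m)
        rw [pow_zero, one_mul]; exact csT0 hm l
      | CSinv =>
        refine step_local m rest .CSinv .CSinv (.T0pow l) (.T0pow 0) rfl rfl rfl rfl rfl ?_ IH'
        show CSginv m * T0 m ^ l = T0 m ^ l * (T0 m ^ 0 * CSginv m)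
        rw [pow_zero, one_mul]; exact csiT0 hm l
      | _ => simp [GateAll.isCS] at hs
    | T1pow l =>
      have hr0 : rest.countP (fun g => g.isCS) = 0 := by simpa [GateAll.isCS] using h0
      have hr1 : rest.countP (fun g => g.isCX) = 1 := by simpa [GateAll.isCX] using h1
      have IH' := fun s₀ hs₀ => ih s₀ hs₀ hr0 hr1
      cases s with
      | CS =>
        refine step_local m rest .CS .CS (.T1pow l) (.T0pow 0) rfl rfl rfl rfl rfl ?_ IH'
        show CSg m * T1 m ^ l = T1 m ^ l * (T0 m ^ 0 * CSg m)
        rw [pow_zero, one_mul]; exact csT1 hm l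
      | CSinv =>
        refine step_local m rest .CSinv .CSinv (.T1pow l) (.T0pow 0) rfl rfl rfl rfl rfl ?_ IH'
        show CSginv m * T1 m ^ l = T1 m ^ l * (T0 m ^ 0 * CSginv m)
        rw [pow_zero, one_mul]; exact csiT1 hm l
      | _ => simp [GateAll.isCS] at hs
    | CX01 =>
      have hr0 : rest.countP (fun g => g.isCS) = 0 := by simpa [GateAll.isCS] using h0
      have hr1 : rest.countP (fun g => g.isCX) = 0 := by simpa [GateAll.isCX] using h1
      cases s with
      | CS =>
        exact step_cx m rest .CS .CX01 (.T1pow 1) (.T0pow 1) (.T1pow (m - 1))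
          rfl rfl rfl rfl rfl rfl rfl rfl hr0 hr1 (csCX01 hm)
      | CSinv =>
        exact step_cx m rest .CSinv .CX01 (.T1pow (m - 1)) (.T0pow (m - 1)) (.T1pow 1)
          rfl rfl rfl rfl rfl rfl rfl rfl hr0 hr1 (csiCX01 hm)
      | _ => simp [GateAll.isCS] at hs
    | CX10 =>
      have hr0 : rest.countP (fun g => g.isCS) = 0 := by simpa [GateAll.isCS] using h0
      have hr1 : rest.countP (fun g => g.isCX) = 0 := by simpa [GateAll.isCX] using h1
      cases s with
      | CS =>
        exact step_cx m rest .CS .CX10 (.T0pow 1) (.T0pow (m - 1)) (.T1pow 1)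
          rfl rfl rfl rfl rfl rfl rfl rfl hr0 hr1 (csCX10 hm)
      | CSinv =>
        exact step_cx m rest .CSinv .CX10 (.T0pow (m - 1)) (.T0pow 1) (.T1pow (m - 1))
          rfl rfl rfl rfl rfl rfl rfl rfl hr0 hr1 (csiCX10 hm)
      | _ => simp [GateAll.isCS] at hs
    | CS => simp [GateAll.isCS] at h0
    | CSinv => simp [GateAll.isCS] at h0

lemma half (m : ℕ) (hm : 0 < m) (P Q : List GateAll) (s : GateAll) (hs : s.isCS = true)
    (hP0 : P.countP (fun g => g.isCS) = 0) (hQ0 : Q.countP (fun g => g.isCS) = 0)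
    (hP1 : P.countP (fun g => g.isCX) = 0) (hQ1 : Q.countP (fun g => g.isCX) = 1) :
    ∃ L' : List GateAll, L'.countP (fun g => g.isCS) = 0 ∧ L'.countP (fun g => g.isCX) = 1 ∧
      (((P ++ s :: Q)).map (GateAll.toMatrix m)).prod = (L'.map (GateAll.toMatrix m)).prod := by
  obtain ⟨L'', c1, c2, heq⟩ := elim m hm Q s hs hQ0 hQ1
  refine ⟨P ++ L'', ?_, ?_, ?_⟩
  · simp [List.countP_append, hP0, c1]
  · simp [List.countP_append, hP1, c2]
  · simp only [List.map_append, List.prod_append, List.map_cons, List.prod_cons] at heq ⊢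
    rw [heq]

end ListMachinery
theorem one_CS_one_CX_removal (m : ℕ) (hm : 0 < m)
    (U : Matrix (Fin 4) (Fin 4) ℂ)
    (h : ∃ L : List GateAll, (L.map (GateAll.toMatrix m)).prod = U ∧
      L.countP (fun g => g.isCS) = 1 ∧ L.countP (fun g => g.isCX) = 1) :
    ∃ L' : List GateAll, L'.countP (fun g => g.isCS) = 0 ∧
      L'.countP (fun g => g.isCX) = 1 ∧
      PhaseEq U ((L'.map (GateAll.toMatrix m)).prod) := by
  obtain ⟨L, hU, h1, h2⟩ := h
  have hpos : 0 < L.countP (fun g => g.isCS) := by omega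
  obtain ⟨s, hsL, hs⟩ := List.countP_pos_iff.mp hpos
  obtain ⟨P, Q, rfl⟩ := List.append_of_mem hsL
  have hsx : s.isCX = false := by
    cases s <;> first | rfl | simp [GateAll.isCS] at hs
  rw [List.countP_append, List.countP_cons, hs, if_pos rfl] at h1
  rw [List.countP_append, List.countP_cons, hsx, if_neg (by simp)] at h2
  have hP0 : P.countP (fun g => g.isCS) = 0 := by omega
  have hQ0 : Q.countP (fun g => g.isCS) = 0 := by omega
  rcases Nat.eq_zero_or_pos (Q.countP (fun g => g.isCX)) with hQ1 | hQ1
  · -- the CX gate is in P : work with the reversed list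
    have hP1 : P.countP (fun g => g.isCX) = 1 := by omega
    obtain ⟨L', c1, c2, heq⟩ := half m hm Q.reverse P.reverse s hs
      (by rwa [List.countP_reverse]) (by rwa [List.countP_reverse])
      (by rwa [List.countP_reverse]) (by rwa [List.countP_reverse])
    refine ⟨L'.reverse, by rwa [List.countP_reverse], by rwa [List.countP_reverse],
      1, one_ne_zero, ?_⟩
    rw [one_smul, ← hU]
    have hrev : (P ++ s :: Q).reverse = Q.reverse ++ s :: P.reverse := by
      simp [List.reverse_append]
    have e1 := prod_rev m (P ++ s :: Q)
    rw [hrev, heq] at e1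
    have e2 := prod_rev m L'
    rw [e2, e1, Matrix.transpose_transpose]
  · -- the CX gate is in Q
    have hQ1' : Q.countP (fun g => g.isCX) = 1 := by omega
    have hP1 : P.countP (fun g => g.isCX) = 0 := by omega
    obtain ⟨L', c1, c2, heq⟩ := half m hm P Q s hs hP0 hQ0 hP1 hQ1'
    exact ⟨L', c1, c2, 1, one_ne_zero, by rw [one_smul, ← hU, heq]⟩

end
end
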